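/- arXiv:1210.1810 — 5 statements merged into one kernel-verified Lean document; each statement's English description precedes it below -/
import Mathlib

section
/- Let ε, δ, η, β > 0 and let m be a positive integer such that exp(−2β²δm) < ε/2. Let X = (X_1, …, X_m) be a random variable taking values in {0,1}^m with Pr(Σ_{i=1}^m X_i ≤ ηm) ≥ ε, and let G ⊆ {0,1}^m be a set with Pr(X ∈ G) ≥ ε/2 such that for every x ∈ G at least a (1−δ) fraction of indices i satisfy Pr(X_i = 0 | X_{<i} = x_{<i}) ≥ 1 − η − β. Then for at least a (1−2δ) fraction of the indices i ∈ {1,…,m} there exists a subset G_i ⊆ G with Pr(X ∈ G_i | X ∈ G) ≥ 1/2 such that every x ∈ G_i satisfies Pr(X_i = 0 | X_{<i} = x_{<i}) ≥ 1 − η − β. -/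
open scoped Classical BigOperators

/-- The probability that the random string distributed according to `p` agrees with `x`
on all coordinates before `i`. -/
noncomputable def prefProb {m : ℕ} (p : (Fin m → Bool) → ℝ) (x : Fin m → Bool) (i : Fin m) : ℝ :=
  ∑ y ∈ Finset.univ.filter (fun y : Fin m → Bool => ∀ j : Fin m, j < i → y j = x j), p y

/-- The conditional probability `Pr(X_i = 0 | X_{<i} = x_{<i})` under the distribution `p`. -/
noncomputable def condZeroProb {m : ℕ} (p : (Fin m → Bool) → ℝ) (x : Fin m → Bool)
    (i : Fin m) : ℝ :=
  (∑ y ∈ Finset.univ.filter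
      (fun y : Fin m → Bool => (∀ j : Fin m, j < i → y j = x j) ∧ y i = false), p y)
    / prefProb p x i

theorem stmt1 {m : ℕ} (hm : 0 < m) (ε δ η β : ℝ)
    (hε : 0 < ε) (hδ : 0 < δ) (hη : 0 < η) (hβ : 0 < β)
    (hexp : Real.exp (-2 * β ^ 2 * δ * m) < ε / 2)
    (p : (Fin m → Bool) → ℝ) (hp0 : ∀ x, 0 ≤ p x) (hp1 : ∑ x, p x = 1)
    (hbig : ε ≤ ∑ x ∈ Finset.univ.filter
        (fun x : Fin m → Bool =>
          ((Finset.univ.filter (fun i : Fin m => x i = true)).card : ℝ) ≤ η * m), p x)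
    (G : Finset (Fin m → Bool))
    (hG : ε / 2 ≤ ∑ x ∈ G, p x)
    (hGgood : ∀ x ∈ G, (1 - δ) * m ≤
        ((Finset.univ.filter
          (fun i : Fin m => 1 - η - β ≤ condZeroProb p x i)).card : ℝ)) :
    (1 - 2 * δ) * m ≤
      ((Finset.univ.filter (fun i : Fin m =>
        ∃ Gi : Finset (Fin m → Bool), Gi ⊆ G ∧
          1 / 2 ≤ (∑ x ∈ Gi, p x) / (∑ x ∈ G, p x) ∧
          ∀ x ∈ Gi, 1 - η - β ≤ condZeroProb p x i)).card : ℝ) := by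
  classical
  set PG := ∑ x ∈ G, p x with hPG
  have hPGpos : 0 < PG := lt_of_lt_of_le (by linarith) hG
  set B : Fin m → Finset (Fin m → Bool) :=
    fun i => G.filter (fun x => 1 - η - β ≤ condZeroProb p x i) with hB
  set S : Finset (Fin m) := Finset.univ.filter (fun i => PG / 2 ≤ ∑ x ∈ B i, p x) with hS
  have hBle : ∀ i, ∑ x ∈ B i, p x ≤ PG := fun i =>
    Finset.sum_le_sum_of_subset_of_nonneg (Finset.filter_subset _ _) (fun x _ _ => hp0 x)
  -- double counting
  have hswap : ∑ i : Fin m, ∑ x ∈ B i, p x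
      = ∑ x ∈ G, p x *
        ((Finset.univ.filter (fun i : Fin m => 1 - η - β ≤ condZeroProb p x i)).card : ℝ) := by
    simp only [hB, Finset.sum_filter]
    rw [Finset.sum_comm]
    refine Finset.sum_congr rfl (fun x _ => ?_)
    rw [← Finset.sum_filter, Finset.sum_const, nsmul_eq_mul, mul_comm]
  have hlower : (1 - δ) * m * PG ≤ ∑ i : Fin m, ∑ x ∈ B i, p x := by
    rw [hswap]
    calc (1 - δ) * m * PG = ∑ x ∈ G, p x * ((1 - δ) * m) := by
          rw [← Finset.sum_mul]; ring
      _ ≤ _ := Finset.sum_le_sum (fun x hx =>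
          mul_le_mul_of_nonneg_left (hGgood x hx) (hp0 x))
  have hupper : ∑ i : Fin m, ∑ x ∈ B i, p x
      ≤ (S.card : ℝ) * PG + ((Finset.univ.filter
          (fun i : Fin m => ¬ (PG / 2 ≤ ∑ x ∈ B i, p x))).card : ℝ) * (PG / 2) := by
    rw [← Finset.sum_filter_add_sum_filter_not Finset.univ
        (fun i : Fin m => PG / 2 ≤ ∑ x ∈ B i, p x)]
    gcongr
    · calc ∑ i ∈ S, ∑ x ∈ B i, p x ≤ ∑ i ∈ S, PG :=
            Finset.sum_le_sum (fun i _ => hBle i)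
        _ = (S.card : ℝ) * PG := by rw [Finset.sum_const, nsmul_eq_mul]
    · calc ∑ i ∈ Finset.univ.filter (fun i : Fin m => ¬ (PG / 2 ≤ ∑ x ∈ B i, p x)),
            ∑ x ∈ B i, p x
          ≤ ∑ i ∈ Finset.univ.filter (fun i : Fin m => ¬ (PG / 2 ≤ ∑ x ∈ B i, p x)),
            PG / 2 := Finset.sum_le_sum (fun i hi => by
              have := (Finset.mem_filter.mp hi).2
              linarith [lt_of_not_ge this])
        _ = _ := by rw [Finset.sum_const, nsmul_eq_mul]
  have hcards : S.card + (Finset.univ.filter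
      (fun i : Fin m => ¬ (PG / 2 ≤ ∑ x ∈ B i, p x))).card = m := by
    rw [hS, Finset.card_filter_add_card_filter_not]
    simp
  have hScard : (1 - 2 * δ) * m ≤ (S.card : ℝ) := by
    set a := (S.card : ℝ)
    set b := ((Finset.univ.filter
      (fun i : Fin m => ¬ (PG / 2 ≤ ∑ x ∈ B i, p x))).card : ℝ)
    have hab : a + b = (m : ℝ) := by
      rw [← Nat.cast_add, hcards]
    have key : (1 - δ) * m * PG ≤ a * PG + b * (PG / 2) := le_trans hlower hupper
    nlinarith [hPGpos, key, hab]
  refine le_trans hScard ?_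
  have hsub : S ⊆ Finset.univ.filter (fun i : Fin m =>
      ∃ Gi : Finset (Fin m → Bool), Gi ⊆ G ∧
        1 / 2 ≤ (∑ x ∈ Gi, p x) / (∑ x ∈ G, p x) ∧
        ∀ x ∈ Gi, 1 - η - β ≤ condZeroProb p x i) := by
    intro i hi
    have hi' := (Finset.mem_filter.mp hi).2
    refine Finset.mem_filter.mpr ⟨Finset.mem_univ i, B i, Finset.filter_subset _ _, ?_, ?_⟩
    · rw [← hPG, le_div_iff₀ hPGpos]
      linarith
    · intro x hx
      exact (Finset.mem_filter.mp hx).2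
  exact_mod_cast Finset.card_le_card hsub
end

section
/- Let m be a positive integer, C ⊆ {1,…,m} a nonempty subset, z ∈ {0,1}^m a fixed string, η ∈ (0,1), and γ ∈ (0,1] such that γm is an integer. Let B be a uniformly random subset of {1,…,m} of cardinality γm. Then the probability that simultaneously (i) B ∩ C is nonempty and Σ_{i∈B∩C} z_i ≤ η·|B∩C|, and (ii) Σ_{i∈C} z_i > 1.1η·|C|, is at most exp(−γ|C|/8) + exp(−η²γ|C|/100). -/
open scoped Classical BigOperators

open Finset Real

/-- Weighted Chebyshev sum inequality for monovarying pairs. -/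
lemma cheb_sum (T : Finset ℕ) (w f g : ℕ → ℝ) (hw : ∀ i ∈ T, 0 ≤ w i)
    (hmono : ∀ i ∈ T, ∀ j ∈ T, 0 ≤ (f i - f j) * (g i - g j)) :
    (∑ i ∈ T, w i * f i) * (∑ i ∈ T, w i * g i) ≤
      (∑ i ∈ T, w i) * (∑ i ∈ T, w i * (f i * g i)) := by
  have key : 0 ≤ ∑ i ∈ T, ∑ j ∈ T, w i * w j * ((f i - f j) * (g i - g j)) := by
    apply Finset.sum_nonneg; intro i hi
    apply Finset.sum_nonneg; intro j hj
    exact mul_nonneg (mul_nonneg (hw i hi) (hw j hj)) (hmono i hi j hj)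
  have expand : ∑ i ∈ T, ∑ j ∈ T, w i * w j * ((f i - f j) * (g i - g j))
      = 2 * ((∑ i ∈ T, w i) * (∑ i ∈ T, w i * (f i * g i))
        - (∑ i ∈ T, w i * f i) * (∑ i ∈ T, w i * g i)) := by
    have h1 : ∀ i ∈ T, ∑ j ∈ T, w i * w j * ((f i - f j) * (g i - g j))
        = w i * (f i * g i) * (∑ j ∈ T, w j) - w i * f i * (∑ j ∈ T, w j * g j)
          - w i * g i * (∑ j ∈ T, w j * f j) + w i * (∑ j ∈ T, w j * (f j * g j)) := by
      intro i _
      rw [Finset.mul_sum, Finset.mul_sum, Finset.mul_sum, Finset.mul_sum,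
        ← Finset.sum_sub_distrib, ← Finset.sum_sub_distrib, ← Finset.sum_add_distrib]
      apply Finset.sum_congr rfl; intro j _; ring
    rw [Finset.sum_congr rfl h1]
    simp only [Finset.sum_add_distrib, Finset.sum_sub_distrib, ← Finset.sum_mul]
    ring
  nlinarith [key, expand]

/-- Vandermonde over a range. -/
lemma vandermonde_range (a b T : ℕ) :
    ∑ j ∈ range (T+1), a.choose j * b.choose (T - j) = (a+b).choose T := by
  rw [Nat.add_choose_eq, Finset.Nat.sum_antidiagonal_eq_sum_range_succ_mk]

/-- Mean identity. -/
lemma mean_identity (a b t : ℕ) (ht : 1 ≤ t) :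
    ∑ j ∈ range (t+1), j * (a.choose j * b.choose (t - j)) = a * (a - 1 + b).choose (t-1) := by
  rcases Nat.eq_zero_or_pos a with rfl | ha
  · rw [Finset.sum_eq_zero, Nat.zero_mul]
    intro j hj
    rcases Nat.eq_zero_or_pos j with rfl | hj0
    · simp
    · simp [Nat.choose_eq_zero_of_lt hj0]
  · obtain ⟨c, rfl⟩ : ∃ c, a = c + 1 := ⟨a - 1, by omega⟩
    obtain ⟨u, rfl⟩ : ∃ u, t = u + 1 := ⟨t - 1, by omega⟩
    rw [Finset.sum_range_succ']
    simp only [Nat.zero_mul, add_zero]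
    have step : ∀ i, (i+1) * ((c+1).choose (i+1) * b.choose (u + 1 - (i+1)))
        = (c+1) * (c.choose i * b.choose (u - i)) := by
      intro i
      have h2 : u + 1 - (i+1) = u - i := by omega
      rw [h2, ← Nat.mul_assoc, ← Nat.mul_assoc, mul_comm (i+1), Nat.add_one_mul_choose_eq]
    rw [Finset.sum_congr rfl (fun i _ => step i), ← Finset.mul_sum, vandermonde_range]
    simp

/-- The real-cast Vandermonde. -/
lemma vandermonde_real (n s t : ℕ) (hs : s ≤ n) :
    ∑ j ∈ range (t+1), (s.choose j : ℝ) * ((n-s).choose (t-j) : ℝ) = (n.choose t : ℝ) := by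
  have := vandermonde_range s (n-s) t
  rw [Nat.add_sub_cancel' hs] at this
  exact_mod_cast this

/-- n * Σ (s-j) c_j = s * (n-t) * C(n,t) in ℝ. -/
lemma mean_real (n s t : ℕ) (hs : s ≤ n) (ht : t ≤ n) :
    (n:ℝ) * (∑ j ∈ range (t+1), ((s:ℝ) - j) * ((s.choose j : ℝ) * ((n-s).choose (t-j) : ℝ)))
      = (s:ℝ) * ((n:ℝ) - t) * (n.choose t : ℝ) := by
  have hsplit : ∑ j ∈ range (t+1), ((s:ℝ) - j) * ((s.choose j : ℝ) * ((n-s).choose (t-j) : ℝ))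
      = (s:ℝ) * (n.choose t : ℝ)
        - ∑ j ∈ range (t+1), (j:ℝ) * ((s.choose j : ℝ) * ((n-s).choose (t-j) : ℝ)) := by
    rw [eq_sub_iff_add_eq, ← Finset.sum_add_distrib]
    rw [show (s:ℝ) * (n.choose t : ℝ)
        = ∑ j ∈ range (t+1), (s:ℝ) * ((s.choose j : ℝ) * ((n-s).choose (t-j) : ℝ)) by
      rw [← Finset.mul_sum, vandermonde_real n s t hs]]
    exact Finset.sum_congr rfl (fun j _ => by ring)
  rcases Nat.eq_zero_or_pos t with rfl | ht1
  · simp [hsplit]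
    ring
  · have hmean : ∑ j ∈ range (t+1), (j:ℝ) * ((s.choose j : ℝ) * ((n-s).choose (t-j) : ℝ))
        = (s:ℝ) * ((n-1).choose (t-1) : ℝ) := by
      have h := mean_identity s (n-s) t ht1
      rcases Nat.eq_zero_or_pos s with rfl | hs1
      · have : ∑ j ∈ range (t+1), (j:ℝ) * (((0:ℕ).choose j : ℝ) * ((n-0).choose (t-j) : ℝ)) = 0 := by
          apply Finset.sum_eq_zero
          intro j hj
          rcases Nat.eq_zero_or_pos j with rfl | hj0
          · simp
          · simp [Nat.choose_eq_zero_of_lt hj0]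
        rw [this]; simp
      · have harg : s - 1 + (n - s) = n - 1 := by omega
        rw [harg] at h
        exact_mod_cast h
    have hNID : (n - t) * n.choose t + n * (n-1).choose (t-1) = n * n.choose t := by
      have h1 : n * (n-1).choose (t-1) = n.choose t * t := by
        have := Nat.add_one_mul_choose_eq (n-1) (t-1)
        have hn1 : n-1+1 = n := by omega
        have ht1' : t-1+1 = t := by omega
        rw [hn1, ht1'] at this
        exact this
      have h2 : n - t + t = n := by omega
      calc (n - t) * n.choose t + n * (n-1).choose (t-1)
          = (n - t) * n.choose t + t * n.choose t := by rw [h1]; ring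
        _ = ((n-t) + t) * n.choose t := by ring
        _ = n * n.choose t := by rw [h2]
    rw [hsplit, hmean]
    have hc : ((n - t : ℕ) : ℝ) = (n:ℝ) - t := by
      have := Nat.cast_sub ht (R := ℝ); exact this
    have := congrArg (fun x : ℕ => (x : ℝ)) hNID
    push_cast at this
    rw [hc] at this
    nlinarith [this]

/-- The step identity. -/
lemma step_identity (n s t : ℕ) (hs : s ≤ n) (lam : ℝ) :
    ((t:ℝ)+1) * (∑ j ∈ range (t+2), (s.choose j : ℝ) * ((n-s).choose (t+1-j) : ℝ) * lam^j)
      = ((n:ℝ) - t) * (∑ j ∈ range (t+1), (s.choose j : ℝ) * ((n-s).choose (t-j) : ℝ) * lam^j)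
        - (1-lam) * ∑ j ∈ range (t+1),
            ((s:ℝ) - j) * ((s.choose j : ℝ) * ((n-s).choose (t-j) : ℝ)) * lam^j := by
  have hsplit : ((t:ℝ)+1) * (∑ j ∈ range (t+2), (s.choose j : ℝ) * ((n-s).choose (t+1-j) : ℝ) * lam^j)
      = (∑ j ∈ range (t+2), ((t+1-j : ℕ):ℝ) * ((s.choose j : ℝ) * ((n-s).choose (t+1-j) : ℝ)) * lam^j)
        + ∑ j ∈ range (t+2), (j:ℝ) * ((s.choose j : ℝ) * ((n-s).choose (t+1-j) : ℝ)) * lam^j := by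
    rw [Finset.mul_sum, ← Finset.sum_add_distrib]
    refine Finset.sum_congr rfl (fun j hj => ?_)
    have hj' : j ≤ t+1 := Nat.lt_succ_iff.mp (Finset.mem_range.mp hj)
    have hc : ((t+1-j : ℕ):ℝ) = ((t:ℝ)+1) - (j:ℝ) := by
      rw [Nat.cast_sub hj']; push_cast; ring
    rw [hc]; ring
  have hA : (∑ j ∈ range (t+2), ((t+1-j : ℕ):ℝ) * ((s.choose j : ℝ) * ((n-s).choose (t+1-j) : ℝ)) * lam^j)
      = ∑ j ∈ range (t+1), (((n-s)-(t-j) : ℕ):ℝ) * ((s.choose j : ℝ) * ((n-s).choose (t-j) : ℝ)) * lam^j := by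
    rw [Finset.sum_range_succ]
    simp only [Nat.sub_self, Nat.cast_zero, zero_mul, mul_zero, add_zero]
    refine Finset.sum_congr rfl (fun j hj => ?_)
    have hj' : j ≤ t := Nat.lt_succ_iff.mp (Finset.mem_range.mp hj)
    have hnat : (t+1-j) * ((n-s).choose (t+1-j)) = ((n-s)-(t-j)) * ((n-s).choose (t-j)) := by
      have h1 : t+1-j = (t-j)+1 := by omega
      rw [h1]
      rw [Nat.mul_comm, Nat.choose_succ_right_eq]
      ring
    have : ((t+1-j : ℕ):ℝ) * (((n-s).choose (t+1-j) : ℕ):ℝ)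
        = (((n-s)-(t-j) : ℕ):ℝ) * (((n-s).choose (t-j) : ℕ):ℝ) := by exact_mod_cast congrArg (fun x : ℕ => (x:ℝ)) hnat
    calc ((t+1-j : ℕ):ℝ) * ((s.choose j : ℝ) * ((n-s).choose (t+1-j) : ℝ)) * lam^j
        = (((t+1-j : ℕ):ℝ) * (((n-s).choose (t+1-j) : ℕ):ℝ)) * (s.choose j : ℝ) * lam^j := by ring
      _ = ((((n-s)-(t-j) : ℕ):ℝ) * (((n-s).choose (t-j) : ℕ):ℝ)) * (s.choose j : ℝ) * lam^j := by rw [this]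
      _ = (((n-s)-(t-j) : ℕ):ℝ) * ((s.choose j : ℝ) * ((n-s).choose (t-j) : ℝ)) * lam^j := by ring
  have hB : (∑ j ∈ range (t+2), (j:ℝ) * ((s.choose j : ℝ) * ((n-s).choose (t+1-j) : ℝ)) * lam^j)
      = lam * ∑ j ∈ range (t+1), ((s-j : ℕ):ℝ) * ((s.choose j : ℝ) * ((n-s).choose (t-j) : ℝ)) * lam^j := by
    rw [Finset.sum_range_succ']
    simp only [Nat.cast_zero, zero_mul, mul_zero, add_zero, Nat.cast_ofNat]
    rw [Finset.mul_sum]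
    refine Finset.sum_congr rfl (fun i hi => ?_)
    have hnat : (i+1) * (s.choose (i+1)) = (s-i) * (s.choose i) := by
      rw [Nat.mul_comm, Nat.choose_succ_right_eq]
      ring
    have hcast : ((i:ℝ)+1) * ((s.choose (i+1) : ℕ):ℝ) = ((s-i : ℕ):ℝ) * ((s.choose i : ℕ):ℝ) := by
      exact_mod_cast congrArg (fun x : ℕ => (x:ℝ)) hnat
    have h2 : t+1-(i+1) = t-i := by omega
    rw [h2]
    push_cast
    calc ((i:ℝ)+1) * ((s.choose (i+1) : ℝ) * ((n-s).choose (t-i) : ℝ)) * lam^(i+1)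
        = (((i:ℝ)+1) * (s.choose (i+1) : ℝ)) * ((n-s).choose (t-i) : ℝ) * (lam * lam^i) := by ring
      _ = (((s-i : ℕ):ℝ) * (s.choose i : ℝ)) * ((n-s).choose (t-i) : ℝ) * (lam * lam^i) := by rw [hcast]
      _ = lam * (((s-i : ℕ):ℝ) * ((s.choose i : ℝ) * ((n-s).choose (t-i) : ℝ)) * lam^i) := by ring
  have hcastA : (∑ j ∈ range (t+1), (((n-s)-(t-j) : ℕ):ℝ) * ((s.choose j : ℝ) * ((n-s).choose (t-j) : ℝ)) * lam^j)
      = ∑ j ∈ range (t+1), ((n:ℝ) - s - t + j) * ((s.choose j : ℝ) * ((n-s).choose (t-j) : ℝ)) * lam^j := by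
    refine Finset.sum_congr rfl (fun j hj => ?_)
    have hj' : j ≤ t := Nat.lt_succ_iff.mp (Finset.mem_range.mp hj)
    by_cases h : t - j ≤ n - s
    · have : (((n-s)-(t-j) : ℕ):ℝ) = ((n:ℝ) - s - t + j) := by
        rw [Nat.cast_sub h, Nat.cast_sub hs, Nat.cast_sub hj']
        ring
      rw [this]
    · have : (n-s).choose (t-j) = 0 := Nat.choose_eq_zero_of_lt (by omega)
      rw [this]
      simp
  have hcastB : (∑ j ∈ range (t+1), ((s-j : ℕ):ℝ) * ((s.choose j : ℝ) * ((n-s).choose (t-j) : ℝ)) * lam^j)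
      = ∑ j ∈ range (t+1), ((s:ℝ) - j) * ((s.choose j : ℝ) * ((n-s).choose (t-j) : ℝ)) * lam^j := by
    refine Finset.sum_congr rfl (fun j hj => ?_)
    by_cases h : j ≤ s
    · rw [Nat.cast_sub h]
    · have : s.choose j = 0 := Nat.choose_eq_zero_of_lt (by omega)
      rw [this]
      simp
  rw [hsplit, hA, hB, hcastA, hcastB]
  rw [Finset.mul_sum, Finset.mul_sum, Finset.mul_sum, ← Finset.sum_add_distrib, ← Finset.sum_sub_distrib]
  refine Finset.sum_congr rfl (fun j hj => ?_)
  ring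

/-- Abstract arithmetic of the induction step. -/
lemma step_arith (t : ℕ) (nR tR sR St W Y S1 Ct Ct1 lam : ℝ)
    (hn : 0 < nR) (ht : tR + 1 ≤ nR) (h0 : 0 ≤ lam) (h1 : lam ≤ 1)
    (hs0 : 0 ≤ sR) (hs : sR ≤ nR)
    (hSt : 0 ≤ St) (hCt : 0 < Ct) (htR : 0 ≤ tR)
    (hcheb : St * W ≤ Ct * Y)
    (hmean : nR * W = sR * (nR - tR) * Ct)
    (hE : (tR+1) * S1 = (nR - tR) * St - (1-lam) * Y)
    (hih : St ≤ Ct * (1 - (1-lam)*(sR/nR))^t)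
    (hchoose : Ct1 * (tR+1) = Ct * (nR - tR)) :
    S1 ≤ Ct1 * (1 - (1-lam)*(sR/nR))^(t+1) := by
  set K : ℝ := 1 - (1-lam)*(sR/nR) with hKdef
  have hsn : sR/nR ≤ 1 := by rw [div_le_one hn]; exact hs
  have hsn0 : 0 ≤ sR/nR := by positivity
  have hK : 0 ≤ K := by rw [hKdef]; nlinarith
  have hnt : 0 ≤ nR - tR := by linarith
  -- from mean and cheb : sR * (nR - tR) * St ≤ nR * Y
  have hY : sR * (nR - tR) * St ≤ nR * Y := by
    have h2 : St * (nR * W) ≤ nR * (Ct * Y) := by nlinarith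
    rw [hmean] at h2
    have h3 : sR * (nR - tR) * St * Ct ≤ nR * Y * Ct := by nlinarith
    exact le_of_mul_le_mul_right h3 hCt
  have hstep : (tR+1) * S1 ≤ (nR - tR) * K * St := by
    rw [hE]
    have hYlow : (1-lam) * (sR * (nR - tR) * St / nR) ≤ (1-lam) * Y := by
      apply mul_le_mul_of_nonneg_left _ (by linarith)
      rw [div_le_iff₀ hn]
      nlinarith
    have expand : (nR - tR) * K * St
        = (nR - tR) * St - (1-lam) * (sR * (nR - tR) * St / nR) := by
      rw [hKdef]
      field_simp
    rw [expand]
    linarith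
  have htpos : 0 < tR + 1 := by linarith
  rw [← mul_le_mul_iff_right₀ htpos]
  calc (tR+1) * S1 ≤ (nR - tR) * K * St := hstep
    _ ≤ (nR - tR) * K * (Ct * K^t) := by
        apply mul_le_mul_of_nonneg_left hih (by positivity)
    _ = (Ct * (nR - tR)) * K^(t+1) := by ring
    _ = (Ct1 * (tR+1)) * K^(t+1) := by rw [hchoose]
    _ = (tR+1) * (Ct1 * K^(t+1)) := by ring

lemma mgf_bound (n s : ℕ) (hs : s ≤ n) (lam : ℝ) (h0 : 0 ≤ lam) (h1 : lam ≤ 1)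
    (t : ℕ) (ht : t ≤ n) :
    ∑ j ∈ range (t+1), (s.choose j : ℝ) * ((n-s).choose (t-j) : ℝ) * lam^j
      ≤ (n.choose t : ℝ) * (1 - (1-lam)*((s:ℝ)/n))^t := by
  induction t with
  | zero => simp
  | succ t ih =>
    have ht' : t ≤ n := Nat.le_of_succ_le ht
    have hn : 0 < n := Nat.lt_of_lt_of_le (Nat.succ_pos t) ht
    have hnR : (0:ℝ) < n := by exact_mod_cast hn
    have hih := ih ht'
    have hcheb := cheb_sum (range (t+1))
      (fun j => (s.choose j : ℝ) * ((n-s).choose (t-j) : ℝ))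
      (fun j => lam^j) (fun j => (s:ℝ) - j)
      (fun i _ => by positivity)
      (fun i _ j _ => by
        show (0:ℝ) ≤ (lam ^ i - lam ^ j) * (((s:ℝ) - i) - ((s:ℝ) - j))
        rcases le_total i j with h | h
        · have hf : lam^j ≤ lam^i := pow_le_pow_of_le_one h0 h1 h
          have hg : (i:ℝ) ≤ j := by exact_mod_cast h
          nlinarith
        · have hf : lam^i ≤ lam^j := pow_le_pow_of_le_one h0 h1 h
          have hg : (j:ℝ) ≤ i := by exact_mod_cast h
          nlinarith)
    rw [vandermonde_real n s t hs] at hcheb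
    have hshape2 : (∑ j ∈ range (t+1), ((s.choose j : ℝ) * ((n-s).choose (t-j) : ℝ)) * ((s:ℝ) - j))
        = ∑ j ∈ range (t+1), ((s:ℝ) - j) * ((s.choose j : ℝ) * ((n-s).choose (t-j) : ℝ)) :=
      Finset.sum_congr rfl (fun j _ => by ring)
    have hshape3 : (∑ j ∈ range (t+1), ((s.choose j : ℝ) * ((n-s).choose (t-j) : ℝ)) * (lam^j * ((s:ℝ) - j)))
        = ∑ j ∈ range (t+1), ((s:ℝ) - j) * ((s.choose j : ℝ) * ((n-s).choose (t-j) : ℝ)) * lam^j :=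
      Finset.sum_congr rfl (fun j _ => by ring)
    rw [hshape2, hshape3] at hcheb
    have hchoose : ((n.choose (t+1) : ℝ)) * ((t:ℝ)+1) = (n.choose t : ℝ) * ((n:ℝ) - t) := by
      have hid := Nat.choose_succ_right_eq n t
      have hc : ((n - t : ℕ):ℝ) = (n:ℝ) - t := Nat.cast_sub ht'
      calc ((n.choose (t+1) : ℝ)) * ((t:ℝ)+1) = ((n.choose (t+1) * (t+1) : ℕ) : ℝ) := by push_cast; ring
        _ = ((n.choose t * (n - t) : ℕ) : ℝ) := by exact_mod_cast congrArg (fun x : ℕ => (x:ℝ)) hid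
        _ = (n.choose t : ℝ) * ((n:ℝ) - t) := by push_cast [hc]; ring
    refine step_arith t (n:ℝ) (t:ℝ) (s:ℝ) _ _ _ _ _ _ lam hnR ?_ h0 h1 (by positivity) (by exact_mod_cast hs)
      (Finset.sum_nonneg (fun j _ => by positivity)) (by exact_mod_cast Nat.choose_pos ht') (by positivity)
      hcheb (mean_real n s t hs ht') (step_identity n s t hs lam) hih hchoose
    exact_mod_cast ht

/-- Binary Pinsker inequality. -/
lemma pinsker (a b : ℝ) (ha0 : 0 < a) (hab : a ≤ b) (hb1 : b < 1) :
    2*(b-a)^2 ≤ a * Real.log (a/b) + (1-a) * Real.log ((1-a)/(1-b)) := by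
  set f : ℝ → ℝ := fun x => a*(Real.log a - Real.log x) + (1-a)*(Real.log (1-a) - Real.log (1-x)) - 2*(x-a)^2 with hfdef
  have ha1 : a < 1 := lt_of_le_of_lt hab hb1
  have hmono : MonotoneOn f (Set.Icc a b) := by
    apply monotoneOn_of_deriv_nonneg (convex_Icc a b)
    · apply ContinuousOn.sub
      apply ContinuousOn.add
      · apply ContinuousOn.mul continuousOn_const
        apply ContinuousOn.sub continuousOn_const
        apply ContinuousOn.log continuousOn_id
        intro x hx
        simp only [Set.mem_Icc] at hx
        simp only [id_eq]
        intro h; rw [h] at hx; linarith [hx.1]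
      · apply ContinuousOn.mul continuousOn_const
        apply ContinuousOn.sub continuousOn_const
        apply ContinuousOn.log (by fun_prop)
        intro x hx
        simp only [Set.mem_Icc] at hx
        intro h
        have : x = 1 := by linarith [sub_eq_zero.mp h]
        linarith [hx.2]
      · fun_prop
    · rw [interior_Icc]
      intro x hx
      obtain ⟨hx1, hx2⟩ := hx
      have hx0 : 0 < x := lt_trans ha0 hx1
      have hx1' : x < 1 := lt_trans hx2 hb1
      apply DifferentiableAt.differentiableWithinAt
      apply DifferentiableAt.sub
      apply DifferentiableAt.add
      · apply DifferentiableAt.mul (differentiableAt_const _)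
        apply DifferentiableAt.sub (differentiableAt_const _)
        exact Real.differentiableAt_log (ne_of_gt hx0)
      · apply DifferentiableAt.mul (differentiableAt_const _)
        apply DifferentiableAt.sub (differentiableAt_const _)
        apply DifferentiableAt.log (by fun_prop)
        intro h
        have : x = 1 := by linarith [sub_eq_zero.mp h]
        linarith
      · fun_prop
    · rw [interior_Icc]
      intro x hx
      obtain ⟨hx1, hx2⟩ := hx
      have hx0 : 0 < x := lt_trans ha0 hx1
      have hx1' : x < 1 := lt_trans hx2 hb1
      have hxne : x ≠ 0 := ne_of_gt hx0
      have hxne1 : (1:ℝ) - x ≠ 0 := sub_ne_zero.mpr (ne_of_lt hx1').symm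
      have hD : HasDerivAt f (-(a/x) + (1-a)/(1-x) - 4*(x-a)) x := by
        have d1 : HasDerivAt Real.log x⁻¹ x := Real.hasDerivAt_log hxne
        have d2 : HasDerivAt (fun y : ℝ => (1:ℝ) - y) (-1) x := by
          simpa using (hasDerivAt_id x).const_sub 1
        have d3 : HasDerivAt (fun y : ℝ => Real.log (1-y)) ((1-x)⁻¹ * (-1)) x :=
          (Real.hasDerivAt_log hxne1).comp x d2
        have d4 := ((hasDerivAt_const x (Real.log a)).sub d1).const_mul a
        have d5 := ((hasDerivAt_const x (Real.log (1-a))).sub d3).const_mul (1-a)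
        have d6 : HasDerivAt (fun y : ℝ => 2*(y-a)^2) (2*(2*(x-a))) x := by
          have h : HasDerivAt (fun y : ℝ => (y-a)) 1 x := by simpa using (hasDerivAt_id x).sub_const a
          simpa using ((h.pow 2).const_mul 2)
        have dAll := (d4.add d5).sub d6
        exact dAll.congr_deriv (by ring)
      rw [hD.deriv]
      have key : -(a/x) + (1-a)/(1-x) - 4*(x-a) = (x-a)*(1-2*x)^2/(x*(1-x)) := by
        field_simp
        ring
      rw [key]
      apply div_nonneg
      · nlinarith
      · nlinarith
  have hfa : f a = 0 := by simp [hfdef]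
  have hfb : 0 ≤ f b := by
    rw [← hfa]
    exact hmono (Set.left_mem_Icc.mpr hab) (Set.right_mem_Icc.mpr hab) hab
  have hb0 : 0 < b := lt_of_lt_of_le ha0 hab
  have hlog1 : Real.log (a/b) = Real.log a - Real.log b := Real.log_div (ne_of_gt ha0) (ne_of_gt hb0)
  have hlog2 : Real.log ((1-a)/(1-b)) = Real.log (1-a) - Real.log (1-b) :=
    Real.log_div (by intro h; linarith) (by intro h; linarith)
  rw [hlog1, hlog2]
  simp only [hfdef] at hfb
  linarith

/-- Generic Chernoff-type tail estimate from the MGF bound. -/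
lemma tail_sum_le (n s t : ℕ) (hs : s ≤ n) (ht : t ≤ n) (P : ℕ → Prop) [DecidablePred P]
    (a lam : ℝ) (hl0 : 0 < lam) (hl1 : lam ≤ 1) (hP : ∀ j, P j → (j:ℝ) ≤ a) :
    ∑ j ∈ (range (t+1)).filter P, ((s.choose j : ℝ) * ((n-s).choose (t-j) : ℝ))
      ≤ lam ^ (-a) * ((n.choose t : ℝ) * (1 - (1-lam)*((s:ℝ)/n))^t) := by
  have h1 : ∑ j ∈ (range (t+1)).filter P, ((s.choose j : ℝ) * ((n-s).choose (t-j) : ℝ))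
      ≤ ∑ j ∈ (range (t+1)).filter P, lam ^ (-a) * ((s.choose j : ℝ) * ((n-s).choose (t-j) : ℝ) * lam^j) := by
    apply Finset.sum_le_sum
    intro j hj
    have hPj := hP j (Finset.mem_filter.mp hj).2
    have hone : 1 ≤ lam ^ (-a) * lam ^ (j:ℕ) := by
      have : lam ^ (-a) * lam ^ (j:ℕ) = lam ^ ((j:ℝ) - a) := by
        rw [← Real.rpow_natCast lam j, ← Real.rpow_add hl0]
        ring_nf
      rw [this]
      apply Real.one_le_rpow_of_pos_of_le_one_of_nonpos hl0 hl1
      linarith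
    have hc : 0 ≤ (s.choose j : ℝ) * ((n-s).choose (t-j) : ℝ) := by positivity
    nlinarith
  have h2 : ∑ j ∈ (range (t+1)).filter P, lam ^ (-a) * ((s.choose j : ℝ) * ((n-s).choose (t-j) : ℝ) * lam^j)
      ≤ ∑ j ∈ range (t+1), lam ^ (-a) * ((s.choose j : ℝ) * ((n-s).choose (t-j) : ℝ) * lam^j) := by
    apply Finset.sum_le_sum_of_subset_of_nonneg (Finset.filter_subset _ _)
    intro j _ _
    positivity
  have h3 : ∑ j ∈ range (t+1), lam ^ (-a) * ((s.choose j : ℝ) * ((n-s).choose (t-j) : ℝ) * lam^j)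
      = lam ^ (-a) * ∑ j ∈ range (t+1), ((s.choose j : ℝ) * ((n-s).choose (t-j) : ℝ) * lam^j) := by
    rw [Finset.mul_sum]
  have h4 := mgf_bound n s hs lam (le_of_lt hl0) hl1 t ht
  have h5 : lam ^ (-a) * (∑ j ∈ range (t+1), (s.choose j : ℝ) * ((n-s).choose (t-j) : ℝ) * lam^j)
      ≤ lam ^ (-a) * ((n.choose t : ℝ) * (1 - (1-lam)*((s:ℝ)/n))^t) :=
    mul_le_mul_of_nonneg_left h4 (Real.rpow_nonneg (le_of_lt hl0) _)
  calc _ ≤ _ := h1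
    _ ≤ _ := h2
    _ = _ := h3
    _ ≤ _ := h5

/-- Analytic evaluation: optimal lambda gives the KL bound, then Pinsker. -/
lemma chernoff_eval (η p : ℝ) (hη0 : 0 < η) (hη1 : η < 1) (hp : 1.1*η ≤ p) (hp1 : p < 1) (t : ℕ) :
    (η*(1-p)/(p*(1-η))) ^ (-(η*(t:ℝ))) * (1 - (1-(η*(1-p)/(p*(1-η))))*p)^t
      ≤ Real.exp (-(η^2*(t:ℝ))/50) := by
  have hηp : η < p := by nlinarith
  have hp0 : 0 < p := by nlinarith
  have h1p : 0 < 1 - p := by linarith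
  have h1η : 0 < 1 - η := by linarith
  set lam : ℝ := η*(1-p)/(p*(1-η)) with hlamdef
  have hlam0 : 0 < lam := by positivity
  have hK : 1 - (1-lam)*p = (1-p)/(1-η) := by
    rw [hlamdef]
    field_simp
    ring
  have hKpos : 0 < (1-p)/(1-η) := by positivity
  rw [hK]
  have hrw1 : lam ^ (-(η*(t:ℝ))) = Real.exp (-(η*(t:ℝ)) * Real.log lam) := by
    rw [Real.rpow_def_of_pos hlam0]
    ring_nf
  have hrw2 : ((1-p)/(1-η))^t = Real.exp ((t:ℝ) * Real.log ((1-p)/(1-η))) := by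
    conv_lhs => rw [← Real.exp_log hKpos]
    rw [← Real.exp_nat_mul]
  rw [hrw1, hrw2, ← Real.exp_add]
  apply Real.exp_le_exp.mpr
  -- key : per-unit exponent bound
  have hKL := pinsker η p hη0 (le_of_lt hηp) hp1
  have hloglam : Real.log lam = Real.log (η/p) + Real.log ((1-p)/(1-η)) := by
    rw [hlamdef,
      show η*(1-p)/(p*(1-η)) = (η/p) * ((1-p)/(1-η)) from by rw [div_mul_div_comm]]
    exact Real.log_mul (ne_of_gt (by positivity)) (ne_of_gt (by positivity))
  have hunit : Real.log ((1-p)/(1-η)) - η * Real.log lam ≤ -(η^2)/50 := by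
    have hlog2 : Real.log ((1-p)/(1-η)) = - Real.log ((1-η)/(1-p)) := by
      rw [← Real.log_inv]
      congr 1
      field_simp
    have hlog3 : Real.log (η/p) = Real.log (η/p) := rfl
    have expand : Real.log ((1-p)/(1-η)) - η * Real.log lam
        = -(η * Real.log (η/p) + (1-η) * Real.log ((1-η)/(1-p))) := by
      rw [hloglam, hlog2]
      ring
    rw [expand]
    have hq : 2*(p-η)^2 ≥ 2*(0.1*η)^2 := by nlinarith
    nlinarith
  have htnn : (0:ℝ) ≤ t := Nat.cast_nonneg t
  calc -(η*(t:ℝ)) * Real.log lam + (t:ℝ) * Real.log ((1-p)/(1-η))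
      = (t:ℝ) * (Real.log ((1-p)/(1-η)) - η * Real.log lam) := by ring
    _ ≤ (t:ℝ) * (-(η^2)/50) := by
        apply mul_le_mul_of_nonneg_left hunit htnn
    _ = -(η^2*(t:ℝ))/50 := by ring

lemma fiber_card_bound (m k : ℕ) (C S : Finset (Fin m)) (Q : Finset (Fin m) → Prop) [DecidablePred Q] :
    (((Finset.powersetCard k (Finset.univ : Finset (Fin m))).filter Q).filter
        (fun B => B ∩ C = S)).card
      ≤ (m - C.card).choose (k - S.card) := by
  have hmaps : ∀ B ∈ ((Finset.powersetCard k (Finset.univ : Finset (Fin m))).filter Q).filter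
      (fun B => B ∩ C = S), B \ C ∈ Finset.powersetCard (k - S.card) (Finset.univ \ C) := by
    intro B hB
    rw [Finset.mem_filter] at hB
    obtain ⟨hB1, hB2⟩ := hB
    rw [Finset.mem_filter] at hB1
    obtain ⟨hB1, _⟩ := hB1
    rw [Finset.mem_powersetCard] at hB1
    obtain ⟨_, hcard⟩ := hB1
    rw [Finset.mem_powersetCard]
    constructor
    · intro x hx
      rw [Finset.mem_sdiff] at hx ⊢
      exact ⟨Finset.mem_univ x, hx.2⟩
    · have := Finset.card_inter_add_card_sdiff B C
      rw [hB2] at this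
      omega
  have hinj : Set.InjOn (fun B => B \ C)
      (((Finset.powersetCard k (Finset.univ : Finset (Fin m))).filter Q).filter
        (fun B => B ∩ C = S)) := by
    intro B1 hB1 B2 hB2 heq
    simp only [Finset.coe_filter, Set.mem_setOf_eq] at hB1 hB2
    have e1 : B1 ∩ C = S := hB1.2
    have e2 : B2 ∩ C = S := hB2.2
    have : B1 \ C ∪ B1 ∩ C = B2 \ C ∪ B2 ∩ C := by
      rw [e1, e2]
      simp only at heq
      rw [heq]
    rwa [Finset.sdiff_union_inter, Finset.sdiff_union_inter] at this
  have hle := Finset.card_le_card_of_injOn _ hmaps hinj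
  rwa [Finset.card_powersetCard, Finset.card_sdiff_of_subset (Finset.subset_univ C),
    Finset.card_univ, Fintype.card_fin] at hle

lemma count_main (m k : ℕ) (C : Finset (Fin m)) (Q : Finset (Fin m) → Prop) [DecidablePred Q]
    (Qs : Finset (Fin m) → Prop) [DecidablePred Qs]
    (hQ : ∀ B, Q B → Qs (B ∩ C)) :
    ((Finset.powersetCard k (Finset.univ : Finset (Fin m))).filter Q).card
      ≤ ∑ t ∈ Finset.range (k+1),
          ((Finset.powersetCard t C).filter Qs).card * ((m - C.card).choose (k - t)) := by
  classical
  have hmaps : ∀ B ∈ (Finset.powersetCard k (Finset.univ : Finset (Fin m))).filter Q,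
      B ∩ C ∈ C.powerset := by
    intro B _
    exact Finset.mem_powerset.mpr Finset.inter_subset_right
  rw [Finset.card_eq_sum_card_fiberwise hmaps]
  set A := C.powerset.filter (fun S => Qs S ∧ S.card ≤ k) with hA
  have step1 : ∑ S ∈ C.powerset,
      (((Finset.powersetCard k (Finset.univ : Finset (Fin m))).filter Q).filter
        (fun B => B ∩ C = S)).card
      ≤ ∑ S ∈ A, (m - C.card).choose (k - S.card) := by
    rw [← Finset.sum_filter_add_sum_filter_not C.powerset (fun S => Qs S ∧ S.card ≤ k)]
    have hzero : ∑ S ∈ C.powerset.filter (fun S => ¬(Qs S ∧ S.card ≤ k)),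
        (((Finset.powersetCard k (Finset.univ : Finset (Fin m))).filter Q).filter
          (fun B => B ∩ C = S)).card = 0 := by
      apply Finset.sum_eq_zero
      intro S hS
      rw [Finset.mem_filter] at hS
      rw [Finset.card_eq_zero]
      rw [Finset.filter_eq_empty_iff]
      intro B hB
      rw [Finset.mem_filter, Finset.mem_powersetCard] at hB
      intro heq
      apply hS.2
      constructor
      · rw [← heq]; exact hQ B hB.2
      · rw [← heq]
        calc (B ∩ C).card ≤ B.card := Finset.card_le_card Finset.inter_subset_left
          _ = k := hB.1.2
    rw [hzero, Nat.add_zero]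
    apply Finset.sum_le_sum
    intro S _
    exact fiber_card_bound m k C S Q
  refine le_trans step1 ?_
  -- regroup by cardinality
  have hmaps2 : ∀ S ∈ A, S.card ∈ Finset.range (k+1) := by
    intro S hS
    rw [hA, Finset.mem_filter] at hS
    rw [Finset.mem_range]
    omega
  rw [← Finset.sum_fiberwise_of_maps_to hmaps2 (fun S => (m - C.card).choose (k - S.card))]
  apply Finset.sum_le_sum
  intro t _
  have heq : ∑ S ∈ A.filter (fun S => S.card = t), (m - C.card).choose (k - S.card)
      = (A.filter (fun S => S.card = t)).card * (m - C.card).choose (k - t) := by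
    calc ∑ S ∈ A.filter (fun S => S.card = t), (m - C.card).choose (k - S.card)
        = ∑ _S ∈ A.filter (fun S => S.card = t), (m - C.card).choose (k - t) :=
          Finset.sum_congr rfl (fun S hS => by rw [(Finset.mem_filter.mp hS).2])
      _ = (A.filter (fun S => S.card = t)).card * (m - C.card).choose (k - t) := by
          rw [Finset.sum_const, smul_eq_mul]
  rw [heq]
  apply Nat.mul_le_mul_right
  apply Finset.card_le_card
  intro S hS
  simp only [hA, Finset.mem_filter, Finset.mem_powerset] at hS
  rw [Finset.mem_filter, Finset.mem_powersetCard]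
  exact ⟨⟨hS.1.1, hS.2⟩, hS.1.2.1⟩

lemma count_ones (m t : ℕ) (C : Finset (Fin m)) (z : Fin m → Bool) (η : ℝ) :
    (((Finset.powersetCard t C).filter
        (fun S => ((S.filter (fun i => z i = true)).card : ℝ) ≤ η * S.card)).card : ℝ)
      ≤ ∑ j ∈ (Finset.range (t+1)).filter (fun j : ℕ => (j:ℝ) ≤ η * t),
          (((C.filter (fun i => z i = true)).card.choose j : ℝ)
            * ((C.card - (C.filter (fun i => z i = true)).card).choose (t - j) : ℝ)) := by
  classical
  set onesC := C.filter (fun i => z i = true) with honesC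
  set restC := C.filter (fun i => ¬(z i = true)) with hrestC
  have hcards : onesC.card + restC.card = C.card := Finset.card_filter_add_card_filter_not _
  -- ℕ level bound
  have hnat : (((Finset.powersetCard t C).filter
        (fun S => ((S.filter (fun i => z i = true)).card : ℝ) ≤ η * S.card)).card
      ≤ ∑ j ∈ (Finset.range (t+1)).filter (fun j : ℕ => (j:ℝ) ≤ η * t),
          onesC.card.choose j * restC.card.choose (t - j)) := by
    have hmaps : ∀ S ∈ (Finset.powersetCard t C).filter
        (fun S => ((S.filter (fun i => z i = true)).card : ℝ) ≤ η * S.card),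
        (S.filter (fun i => z i = true)).card ∈ Finset.range (t+1) := by
      intro S hS
      rw [Finset.mem_filter, Finset.mem_powersetCard] at hS
      rw [Finset.mem_range]
      have := Finset.card_filter_le S (fun i => z i = true)
      omega
    rw [Finset.card_eq_sum_card_fiberwise hmaps]
    rw [← Finset.sum_filter_add_sum_filter_not (Finset.range (t+1)) (fun j : ℕ => (j:ℝ) ≤ η * t)]
    have hzero : ∑ j ∈ (Finset.range (t+1)).filter (fun j : ℕ => ¬((j:ℝ) ≤ η * t)),
        (((Finset.powersetCard t C).filter
          (fun S => ((S.filter (fun i => z i = true)).card : ℝ) ≤ η * S.card)).filter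
            (fun S => (S.filter (fun i => z i = true)).card = j)).card = 0 := by
      apply Finset.sum_eq_zero
      intro j hj
      rw [Finset.mem_filter] at hj
      rw [Finset.card_eq_zero, Finset.filter_eq_empty_iff]
      intro S hS
      rw [Finset.mem_filter, Finset.mem_powersetCard] at hS
      intro heq
      apply hj.2
      rw [← heq]
      calc ((S.filter (fun i => z i = true)).card : ℝ) ≤ η * S.card := hS.2
        _ = η * t := by rw [hS.1.2]
    rw [hzero, Nat.add_zero]
    apply Finset.sum_le_sum
    intro j _
    -- fiber bound via product injection
    have hmaps2 : ∀ S ∈ ((Finset.powersetCard t C).filter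
          (fun S => ((S.filter (fun i => z i = true)).card : ℝ) ≤ η * S.card)).filter
            (fun S => (S.filter (fun i => z i = true)).card = j),
        (S.filter (fun i => z i = true), S.filter (fun i => ¬(z i = true)))
          ∈ (Finset.powersetCard j onesC) ×ˢ (Finset.powersetCard (t-j) restC) := by
      intro S hS
      rw [Finset.mem_filter] at hS
      obtain ⟨hS1, hS2⟩ := hS
      rw [Finset.mem_filter, Finset.mem_powersetCard] at hS1
      obtain ⟨⟨hSC, hScard⟩, _⟩ := hS1
      rw [Finset.mem_product, Finset.mem_powersetCard, Finset.mem_powersetCard]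
      have hsum := Finset.card_filter_add_card_filter_not
        (s := S) (p := fun i => z i = true)
      dsimp only
      refine ⟨⟨Finset.filter_subset_filter _ hSC, hS2⟩,
        ⟨Finset.filter_subset_filter _ hSC, ?_⟩⟩
      omega
    have hinj : Set.InjOn (fun S : Finset (Fin m) => (S.filter (fun i => z i = true), S.filter (fun i => ¬(z i = true))))
        (((Finset.powersetCard t C).filter
          (fun S => ((S.filter (fun i => z i = true)).card : ℝ) ≤ η * S.card)).filter
            (fun S => (S.filter (fun i => z i = true)).card = j)) := by
      intro S1 _ S2 _ heq
      simp only [Prod.mk.injEq] at heq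
      have h1 := Finset.filter_union_filter_not_eq (p := fun i => z i = true) S1
      have h2 := Finset.filter_union_filter_not_eq (p := fun i => z i = true) S2
      rw [← h1, ← h2, heq.1, heq.2]
    have hle := Finset.card_le_card_of_injOn _ hmaps2 hinj
    rwa [Finset.card_product, Finset.card_powersetCard, Finset.card_powersetCard] at hle
  calc (((Finset.powersetCard t C).filter
        (fun S => ((S.filter (fun i => z i = true)).card : ℝ) ≤ η * S.card)).card : ℝ)
      ≤ ((∑ j ∈ (Finset.range (t+1)).filter (fun j : ℕ => (j:ℝ) ≤ η * t),
          onesC.card.choose j * restC.card.choose (t - j) : ℕ) : ℝ) := by exact_mod_cast hnat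
    _ = ∑ j ∈ (Finset.range (t+1)).filter (fun j : ℕ => (j:ℝ) ≤ η * t),
          ((onesC.card.choose j : ℝ) * ((C.card - onesC.card).choose (t - j) : ℝ)) := by
        push_cast
        apply Finset.sum_congr rfl
        intro j _
        have : restC.card = C.card - onesC.card := by omega
        rw [this]

/-- Branch 2 per-t bound. -/
lemma branch2_bound (n s t : ℕ) (hs : s ≤ n) (ht : t ≤ n) (η : ℝ) (hη0 : 0 < η) (hη1 : η < 1)
    (hp : 1.1 * η * (n:ℝ) < (s:ℝ)) :
    ∑ j ∈ (range (t+1)).filter (fun j : ℕ => (j:ℝ) ≤ η * t),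
        ((s.choose j : ℝ) * ((n-s).choose (t-j) : ℝ))
      ≤ (n.choose t : ℝ) * Real.exp (-(η^2*(t:ℝ))/50) := by
  have hs1 : 1 ≤ s := by
    by_contra h
    push_neg at h
    interval_cases s
    have h0 : ((0:ℕ):ℝ) = 0 := by norm_num
    rw [h0] at hp
    nlinarith [mul_nonneg (mul_nonneg (by norm_num : (0:ℝ) ≤ 1.1) (le_of_lt hη0)) (Nat.cast_nonneg n)]
  have hn1 : 1 ≤ n := le_trans hs1 hs
  have hnR : (0:ℝ) < n := by exact_mod_cast Nat.lt_of_lt_of_le Nat.zero_lt_one hn1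
  rcases eq_or_lt_of_le hs with rfl | hslt
  · -- s = n : all terms vanish except possibly j = t, which needs t ≤ η t
    rcases Nat.eq_zero_or_pos t with rfl | ht1
    · -- t = 0
      have hsub : ∑ j ∈ (range (0+1)).filter (fun j : ℕ => (j:ℝ) ≤ η * (0:ℕ)),
            ((s.choose j : ℝ) * ((s-s).choose (0-j) : ℝ))
          ≤ ∑ j ∈ range (0+1), ((s.choose j : ℝ) * ((s-s).choose (0-j) : ℝ)) :=
        Finset.sum_le_sum_of_subset_of_nonneg (Finset.filter_subset _ _)
          (fun j _ _ => by positivity)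
      refine le_trans hsub ?_
      simp
    · rw [Finset.sum_eq_zero]
      · positivity
      · intro j hj
        rw [Finset.mem_filter, Finset.mem_range] at hj
        have hjle : j ≤ t := Nat.lt_succ_iff.mp hj.1
        have hjlt : j < t := by
          rcases lt_or_eq_of_le hjle with h | h
          · exact h
          · exfalso
            subst h
            have h2 : (j:ℝ) ≤ η * j := hj.2
            have h3 : (0:ℝ) < j := by exact_mod_cast ht1
            nlinarith
        have hz : (s - s).choose (t - j) = 0 := by
          rw [Nat.sub_self]
          exact Nat.choose_eq_zero_of_lt (by omega)
        rw [hz]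
        simp
  · -- s < n
    set p : ℝ := (s:ℝ)/n with hpdef
    have hp1 : p < 1 := by
      rw [hpdef, div_lt_one hnR]
      exact_mod_cast hslt
    have hp2 : 1.1 * η ≤ p := by
      rw [hpdef, le_div_iff₀ hnR]
      linarith
    have hηp : η < p := by nlinarith
    have hp0 : 0 < p := by nlinarith
    set lam : ℝ := η*(1-p)/(p*(1-η)) with hlamdef
    have hlam0 : 0 < lam := by
      apply div_pos
      · apply mul_pos hη0; linarith
      · apply mul_pos hp0; linarith
    have hlam1 : lam ≤ 1 := by
      rw [hlamdef, div_le_one (by apply mul_pos hp0; linarith)]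
      nlinarith
    have h1 := tail_sum_le n s t hs ht (fun j : ℕ => (j:ℝ) ≤ η * t) (η * t) lam hlam0 hlam1
      (fun j hj => hj)
    have h2 := chernoff_eval η p hη0 hη1 hp2 hp1 t
    calc ∑ j ∈ (range (t+1)).filter (fun j : ℕ => (j:ℝ) ≤ η * t),
          ((s.choose j : ℝ) * ((n-s).choose (t-j) : ℝ))
        ≤ lam ^ (-(η * (t:ℝ))) * ((n.choose t : ℝ) * (1 - (1-lam)*((s:ℝ)/n))^t) := h1
      _ = (n.choose t : ℝ) * (lam ^ (-(η * (t:ℝ))) * (1 - (1-lam)*p)^t) := by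
          rw [← hpdef]; ring
      _ ≤ (n.choose t : ℝ) * Real.exp (-(η^2*(t:ℝ))/50) := by
          apply mul_le_mul_of_nonneg_left h2 (Nat.cast_nonneg _)

/-- Branch 1: small-intersection tail. -/
lemma branch1_bound (m n k : ℕ) (hn : n ≤ m) (hk : k ≤ m) (γ : ℝ) (hγ0 : 0 < γ)
    (hγk : (k:ℝ) = γ * m) :
    ∑ t ∈ (range (k+1)).filter (fun t : ℕ => (t:ℝ) < γ * n / 2),
        ((n.choose t : ℝ) * ((m-n).choose (k-t) : ℝ))
      ≤ (m.choose k : ℝ) * Real.exp (-(γ*(n:ℝ))/8) := by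
  rcases Nat.eq_zero_or_pos m with rfl | hm
  · have hn0 : n = 0 := Nat.le_zero.mp hn
    have hk0 : k = 0 := Nat.le_zero.mp hk
    subst hn0; subst hk0
    have hempty : (range (0+1)).filter (fun t : ℕ => (t:ℝ) < γ * (0:ℕ) / 2) = ∅ := by
      apply Finset.filter_eq_empty_iff.mpr
      intro t ht
      rw [Finset.mem_range] at ht
      interval_cases t
      simp
    rw [hempty, Finset.sum_empty]
    positivity
  · have hmR : (0:ℝ) < m := by exact_mod_cast hm
    have h1 := tail_sum_le m n k hn hk (fun t : ℕ => (t:ℝ) < γ * n / 2) (γ * n / 2) (1/2)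
      (by norm_num) (by norm_num) (fun j hj => le_of_lt hj)
    refine le_trans h1 ?_
    have hx : (0:ℝ) ≤ 1 - (1 - 1/2) * ((n:ℝ)/m) := by
      have : (n:ℝ)/m ≤ 1 := by
        rw [div_le_one hmR]; exact_mod_cast hn
      nlinarith [this]
    have step1 : (1 - (1 - 1/2) * ((n:ℝ)/m))^k ≤ Real.exp (-(k:ℝ) * ((n:ℝ)/(2*m))) := by
      have hb : 1 - (1 - 1/2) * ((n:ℝ)/m) ≤ Real.exp (-((n:ℝ)/(2*m))) := by
        have := Real.add_one_le_exp (-((n:ℝ)/(2*m)))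
        have heq : (1:ℝ) - (1 - 1/2) * ((n:ℝ)/m) = -((n:ℝ)/(2*m)) + 1 := by
          field_simp
          ring
        rw [heq]
        exact this
      calc (1 - (1 - 1/2) * ((n:ℝ)/m))^k ≤ (Real.exp (-((n:ℝ)/(2*m))))^k :=
            pow_le_pow_left₀ hx hb k
        _ = Real.exp (-(k:ℝ) * ((n:ℝ)/(2*m))) := by
            rw [← Real.exp_nat_mul]
            ring_nf
    have step2 : ((1:ℝ)/2) ^ (-(γ * (n:ℝ) / 2)) = Real.exp (γ * (n:ℝ) / 2 * Real.log 2) := by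
      rw [Real.rpow_def_of_pos (by norm_num)]
      rw [show Real.log ((1:ℝ)/2) = -Real.log 2 by
        rw [one_div, Real.log_inv]]
      ring_nf
    have hkey : Real.exp (γ * (n:ℝ) / 2 * Real.log 2) * Real.exp (-(k:ℝ) * ((n:ℝ)/(2*m)))
        ≤ Real.exp (-(γ*(n:ℝ))/8) := by
      rw [← Real.exp_add]
      apply Real.exp_le_exp.mpr
      have hkn : (k:ℝ) * ((n:ℝ)/(2*m)) = γ * n / 2 := by
        rw [hγk]
        field_simp
      have hlog2 : Real.log 2 ≤ 0.75 := le_of_lt (lt_trans Real.log_two_lt_d9 (by norm_num))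
      have hγn : (0:ℝ) ≤ γ * n := by positivity
      nlinarith [hγn, hlog2, hkn]
    calc ((1:ℝ)/2) ^ (-(γ * (n:ℝ) / 2)) * ((m.choose k : ℝ) * (1 - (1 - 1/2) * ((n:ℝ)/m))^k)
        ≤ ((1:ℝ)/2) ^ (-(γ * (n:ℝ) / 2)) * ((m.choose k : ℝ) * Real.exp (-(k:ℝ) * ((n:ℝ)/(2*m)))) := by
          apply mul_le_mul_of_nonneg_left _ (Real.rpow_nonneg (by norm_num) _)
          apply mul_le_mul_of_nonneg_left step1 (Nat.cast_nonneg _)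
      _ = (m.choose k : ℝ) * (Real.exp (γ * (n:ℝ) / 2 * Real.log 2) * Real.exp (-(k:ℝ) * ((n:ℝ)/(2*m)))) := by
          rw [step2]; ring
      _ ≤ (m.choose k : ℝ) * Real.exp (-(γ*(n:ℝ))/8) := by
          apply mul_le_mul_of_nonneg_left hkey (Nat.cast_nonneg _)


theorem stmt3 (m : ℕ) (hm : 0 < m) (C : Finset (Fin m)) (hC : C.Nonempty)
    (z : Fin m → Bool) (η : ℝ) (hη0 : 0 < η) (hη1 : η < 1)
    (γ : ℝ) (hγ0 : 0 < γ) (hγ1 : γ ≤ 1) (k : ℕ) (hk : (k : ℝ) = γ * m) :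
    (((Finset.powersetCard k (Finset.univ : Finset (Fin m))).filter
        (fun B : Finset (Fin m) =>
          ((B ∩ C).Nonempty ∧
            (((B ∩ C).filter (fun i => z i = true)).card : ℝ) ≤ η * (B ∩ C).card) ∧
          1.1 * η * C.card < ((C.filter (fun i => z i = true)).card : ℝ))).card : ℝ) /
      ((Finset.powersetCard k (Finset.univ : Finset (Fin m))).card : ℝ)
    ≤ Real.exp (-(γ * C.card) / 8) + Real.exp (-(η ^ 2 * γ * C.card) / 100) := by
  classical
  have hkm : k ≤ m := by
    have : (k:ℝ) ≤ m := by
      rw [hk]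
      nlinarith [Nat.cast_nonneg (α := ℝ) m]
    exact_mod_cast this
  have hnm : C.card ≤ m := by
    calc C.card ≤ (Finset.univ : Finset (Fin m)).card := Finset.card_le_card (Finset.subset_univ C)
      _ = m := by rw [Finset.card_univ, Fintype.card_fin]
  have hNcard : ((Finset.powersetCard k (Finset.univ : Finset (Fin m))).card : ℝ) = (m.choose k : ℝ) := by
    rw [Finset.card_powersetCard, Finset.card_univ, Fintype.card_fin]
  have hN0 : (0:ℝ) < ((Finset.powersetCard k (Finset.univ : Finset (Fin m))).card : ℝ) := by
    rw [hNcard]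
    exact_mod_cast Nat.choose_pos hkm
  rw [div_le_iff₀ hN0]
  by_cases hsC : 1.1 * η * (C.card:ℝ) < ((C.filter (fun i => z i = true)).card : ℝ)
  case neg =>
    have hempty : (Finset.powersetCard k (Finset.univ : Finset (Fin m))).filter
        (fun B : Finset (Fin m) =>
          ((B ∩ C).Nonempty ∧
            (((B ∩ C).filter (fun i => z i = true)).card : ℝ) ≤ η * (B ∩ C).card) ∧
          1.1 * η * C.card < ((C.filter (fun i => z i = true)).card : ℝ)) = ∅ := by
      apply Finset.filter_eq_empty_iff.mpr
      intro B _
      intro hBig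
      exact hsC hBig.2
    rw [hempty]
    simp only [Finset.card_empty, Nat.cast_zero]
    positivity
  case pos =>
  -- notation
  set n : ℕ := C.card with hn
  set s : ℕ := (C.filter (fun i => z i = true)).card with hs
  have hsn : s ≤ n := Finset.card_le_card (Finset.filter_subset _ _)
  -- Step 1: drop extra conjuncts
  set Qs : Finset (Fin m) → Prop :=
    fun S => ((S.filter (fun i => z i = true)).card : ℝ) ≤ η * S.card with hQs
  have hsubset : (Finset.powersetCard k (Finset.univ : Finset (Fin m))).filter
      (fun B : Finset (Fin m) =>
        ((B ∩ C).Nonempty ∧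
          (((B ∩ C).filter (fun i => z i = true)).card : ℝ) ≤ η * (B ∩ C).card) ∧
        1.1 * η * C.card < ((C.filter (fun i => z i = true)).card : ℝ))
      ⊆ (Finset.powersetCard k (Finset.univ : Finset (Fin m))).filter (fun B => Qs (B ∩ C)) := by
    intro B hB
    rw [Finset.mem_filter] at hB ⊢
    exact ⟨hB.1, hB.2.1.2⟩
  have hcard1 := Finset.card_le_card hsubset
  -- Step 2: main counting bound
  have hcount := count_main m k C (fun B => Qs (B ∩ C)) Qs (fun B h => h)
  -- real versions
  set e1 : ℝ := Real.exp (-(γ * (n:ℝ)) / 8) with he1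
  set e2 : ℝ := Real.exp (-(η ^ 2 * γ * (n:ℝ)) / 100) with he2
  have hmain : (((Finset.powersetCard k (Finset.univ : Finset (Fin m))).filter (fun B => Qs (B ∩ C))).card : ℝ)
      ≤ (m.choose k : ℝ) * e1 + (m.choose k : ℝ) * e2 := by
    have hcast : (((Finset.powersetCard k (Finset.univ : Finset (Fin m))).filter (fun B => Qs (B ∩ C))).card : ℝ)
        ≤ ∑ t ∈ Finset.range (k+1),
            (((Finset.powersetCard t C).filter Qs).card : ℝ) * (((m - n).choose (k - t) : ℕ) : ℝ) := by
      calc (((Finset.powersetCard k (Finset.univ : Finset (Fin m))).filter (fun B => Qs (B ∩ C))).card : ℝ)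
          ≤ ((∑ t ∈ Finset.range (k+1),
              ((Finset.powersetCard t C).filter Qs).card * ((m - n).choose (k - t)) : ℕ) : ℝ) := by
            exact_mod_cast hcount
        _ = _ := by push_cast; rfl
    refine le_trans hcast ?_
    rw [← Finset.sum_filter_add_sum_filter_not (Finset.range (k+1)) (fun t : ℕ => (t:ℝ) < γ * (n:ℝ) / 2)]
    have hbound1 : ∑ t ∈ (Finset.range (k+1)).filter (fun t : ℕ => (t:ℝ) < γ * (n:ℝ) / 2),
        (((Finset.powersetCard t C).filter Qs).card : ℝ) * (((m - n).choose (k - t) : ℕ) : ℝ)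
        ≤ (m.choose k : ℝ) * e1 := by
      have hle : ∀ t ∈ (Finset.range (k+1)).filter (fun t : ℕ => (t:ℝ) < γ * (n:ℝ) / 2),
          (((Finset.powersetCard t C).filter Qs).card : ℝ) * (((m - n).choose (k - t) : ℕ) : ℝ)
            ≤ (n.choose t : ℝ) * (((m - n).choose (k - t) : ℕ) : ℝ) := by
        intro t _
        apply mul_le_mul_of_nonneg_right _ (Nat.cast_nonneg _)
        have h1 : ((Finset.powersetCard t C).filter Qs).card ≤ (Finset.powersetCard t C).card :=
          Finset.card_filter_le _ _
        have h2 : (Finset.powersetCard t C).card = n.choose t := by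
          rw [Finset.card_powersetCard]
        exact_mod_cast h2 ▸ h1
      refine le_trans (Finset.sum_le_sum hle) ?_
      exact branch1_bound m n k hnm hkm γ hγ0 hk
    have hbound2 : ∑ t ∈ (Finset.range (k+1)).filter (fun t : ℕ => ¬((t:ℝ) < γ * (n:ℝ) / 2)),
        (((Finset.powersetCard t C).filter Qs).card : ℝ) * (((m - n).choose (k - t) : ℕ) : ℝ)
        ≤ (m.choose k : ℝ) * e2 := by
      have hle : ∀ t ∈ (Finset.range (k+1)).filter (fun t : ℕ => ¬((t:ℝ) < γ * (n:ℝ) / 2)),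
          (((Finset.powersetCard t C).filter Qs).card : ℝ) * (((m - n).choose (k - t) : ℕ) : ℝ)
            ≤ (e2 * (n.choose t : ℝ)) * (((m - n).choose (k - t) : ℕ) : ℝ) := by
        intro t htmem
        rw [Finset.mem_filter] at htmem
        push_neg at htmem
        have htγ : γ * (n:ℝ) / 2 ≤ (t:ℝ) := htmem.2
        apply mul_le_mul_of_nonneg_right _ (Nat.cast_nonneg _)
        by_cases htn : t ≤ n
        · have hco := count_ones m t C z η
          have hb2 := branch2_bound n s t hsn htn η hη0 hη1 hsC
          have hexp : Real.exp (-(η^2*(t:ℝ))/50) ≤ e2 := by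
            rw [he2]
            apply Real.exp_le_exp.mpr
            nlinarith [sq_nonneg η, hγ0]
          calc (((Finset.powersetCard t C).filter Qs).card : ℝ)
              ≤ ∑ j ∈ (Finset.range (t+1)).filter (fun j : ℕ => (j:ℝ) ≤ η * t),
                  ((s.choose j : ℝ) * ((n-s).choose (t-j) : ℝ)) := hco
            _ ≤ (n.choose t : ℝ) * Real.exp (-(η^2*(t:ℝ))/50) := hb2
            _ ≤ (n.choose t : ℝ) * e2 := by
                apply mul_le_mul_of_nonneg_left hexp (Nat.cast_nonneg _)
            _ = e2 * (n.choose t : ℝ) := by ring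
        · push_neg at htn
          have hzero : (Finset.powersetCard t C).filter Qs = ∅ := by
            rw [Finset.powersetCard_eq_empty.mpr htn, Finset.filter_empty]
          rw [hzero]
          simp only [Finset.card_empty, Nat.cast_zero]
          positivity
      refine le_trans (Finset.sum_le_sum hle) ?_
      have hfact : ∑ t ∈ (Finset.range (k+1)).filter (fun t : ℕ => ¬((t:ℝ) < γ * (n:ℝ) / 2)),
          (e2 * (n.choose t : ℝ)) * (((m - n).choose (k - t) : ℕ) : ℝ)
          = e2 * ∑ t ∈ (Finset.range (k+1)).filter (fun t : ℕ => ¬((t:ℝ) < γ * (n:ℝ) / 2)),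
              (n.choose t : ℝ) * (((m - n).choose (k - t) : ℕ) : ℝ) := by
        rw [Finset.mul_sum]
        exact Finset.sum_congr rfl (fun t _ => by ring)
      rw [hfact]
      have hsum1 : ∑ t ∈ (Finset.range (k+1)).filter (fun t : ℕ => ¬((t:ℝ) < γ * (n:ℝ) / 2)),
          (n.choose t : ℝ) * (((m - n).choose (k - t) : ℕ) : ℝ)
          ≤ ∑ t ∈ Finset.range (k+1), (n.choose t : ℝ) * (((m - n).choose (k - t) : ℕ) : ℝ) :=
        Finset.sum_le_sum_of_subset_of_nonneg (Finset.filter_subset _ _)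
          (fun t _ _ => by positivity)
      rw [vandermonde_real m n k hnm] at hsum1
      have he2nn : 0 ≤ e2 := le_of_lt (Real.exp_pos _)
      calc e2 * ∑ t ∈ (Finset.range (k+1)).filter (fun t : ℕ => ¬((t:ℝ) < γ * (n:ℝ) / 2)),
            (n.choose t : ℝ) * (((m - n).choose (k - t) : ℕ) : ℝ)
          ≤ e2 * (m.choose k : ℝ) := mul_le_mul_of_nonneg_left hsum1 he2nn
        _ = (m.choose k : ℝ) * e2 := by ring
    exact add_le_add hbound1 hbound2
  -- conclude
  have hfinal : (((Finset.powersetCard k (Finset.univ : Finset (Fin m))).filter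
      (fun B : Finset (Fin m) =>
        ((B ∩ C).Nonempty ∧
          (((B ∩ C).filter (fun i => z i = true)).card : ℝ) ≤ η * (B ∩ C).card) ∧
        1.1 * η * C.card < ((C.filter (fun i => z i = true)).card : ℝ))).card : ℝ)
      ≤ (m.choose k : ℝ) * e1 + (m.choose k : ℝ) * e2 := by
    refine le_trans ?_ hmain
    exact_mod_cast hcard1
  rw [hNcard]
  calc (((Finset.powersetCard k (Finset.univ : Finset (Fin m))).filter
      (fun B : Finset (Fin m) =>
        ((B ∩ C).Nonempty ∧
          (((B ∩ C).filter (fun i => z i = true)).card : ℝ) ≤ η * (B ∩ C).card) ∧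
        1.1 * η * C.card < ((C.filter (fun i => z i = true)).card : ℝ))).card : ℝ)
      ≤ (m.choose k : ℝ) * e1 + (m.choose k : ℝ) * e2 := hfinal
    _ = (e1 + e2) * (m.choose k : ℝ) := by ring
    _ = (Real.exp (-(γ * (C.card:ℝ)) / 8) + Real.exp (-(η ^ 2 * γ * (C.card:ℝ)) / 100)) * (m.choose k : ℝ) := by
        rw [he1, he2]
end

section
/- Let S be a finite nonempty set, m a positive integer, and let X = (X_1,…,X_m) be a random variable distributed uniformly on S^m, defined jointly with other random variables on a common probability space. Let D be any event with Pr(D) ≥ ε > 0. For each i and each prefix w ∈ S^{i−1} with Pr(X_{<i} = w, D) > 0, let P_i(·|w) denote the conditional distribution of X_i given X_{<i} = w and D. Then (1/m) Σ_{i=1}^m E_w[ d_TV( P_i(·|w), Unif(S) ) ] ≤ √( log₂(1/ε) / (2m) ), where for each i the expectation is over w distributed as X_{<i} conditioned on D, and Unif(S) is the uniform distribution on S. -/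
open scoped Classical BigOperators
open MeasureTheory

private noncomputable def phi (t : ℝ) : ℝ := t * Real.log t - t + 1 - 3*(t-1)^2/(2*(t+2))
private noncomputable def phi' (t : ℝ) : ℝ := Real.log t - (3/2) * ((t-1)*(t+5)/(t+2)^2)

private lemma hasDerivAt_phi {t : ℝ} (ht : 0 < t) : HasDerivAt phi (phi' t) t := by
  have h2 : t + 2 ≠ 0 := by linarith
  have h1 : HasDerivAt (fun t : ℝ => t * Real.log t) (Real.log t + 1) t :=
    Real.hasDerivAt_mul_log ht.ne'
  have hnum : HasDerivAt (fun t : ℝ => 3*(t-1)^2) (6*(t-1)) t := by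
    have : HasDerivAt (fun t : ℝ => (t-1)) 1 t := (hasDerivAt_id t).sub_const 1
    have h := (this.pow 2).const_mul 3
    convert h using 1
    · rfl
    · rfl
    · rfl
    · ring_nf
  have hden : HasDerivAt (fun t : ℝ => 2*(t+2)) 2 t := by
    simpa using ((hasDerivAt_id t).add_const 2).const_mul 2
  have h2' : 2*(t+2) ≠ 0 := by positivity
  have hrat := hnum.div hden h2'
  have h := (h1.sub (hasDerivAt_id t)).add_const 1 |>.sub hrat
  convert h using 1
  · rfl
  · rfl
  · rfl
  unfold phi'
  field_simp
  ring

private lemma hasDerivAt_phi' {t : ℝ} (ht : 0 < t) :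
    HasDerivAt phi' (1/t - 27/(t+2)^3) t := by
  have h2 : t + 2 ≠ 0 := by linarith
  have h1 : HasDerivAt Real.log (1/t) t := by
    simpa [one_div] using Real.hasDerivAt_log ht.ne'
  have hnum : HasDerivAt (fun t : ℝ => (t-1)*(t+5)) ((t+5) + (t-1)) t := by
    have ha : HasDerivAt (fun t : ℝ => (t-1)) 1 t := (hasDerivAt_id t).sub_const 1
    have hb : HasDerivAt (fun t : ℝ => (t+5)) 1 t := (hasDerivAt_id t).add_const 5
    simpa using ha.fun_mul hb
  have hden : HasDerivAt (fun t : ℝ => (t+2)^2) (2*(t+2)) t := by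
    have : HasDerivAt (fun t : ℝ => (t+2)) 1 t := (hasDerivAt_id t).add_const 2
    simpa [mul_comm] using this.fun_pow 2
  have h2' : (t+2)^2 ≠ 0 := by positivity
  have hrat := (hnum.div hden h2').const_mul (3/2 : ℝ)
  have h := h1.sub hrat
  convert h using 1
  · rfl
  · rfl
  · rfl
  field_simp
  ring

private lemma phi'_one : phi' 1 = 0 := by simp [phi']

private lemma phi_one : phi 1 = 0 := by simp [phi]

private lemma phi'_mono : MonotoneOn phi' (Set.Ioi (0:ℝ)) := by
  apply monotoneOn_of_hasDerivWithinAt_nonneg (f' := fun t => 1/t - 27/(t+2)^3)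
    (convex_Ioi 0)
  · exact fun t ht => (hasDerivAt_phi' ht).continuousAt.continuousWithinAt
  · intro t ht
    rw [interior_Ioi] at ht
    exact (hasDerivAt_phi' ht).hasDerivWithinAt
  · intro t ht
    rw [interior_Ioi] at ht
    have ht' : (0:ℝ) < t := ht
    have h2 : (0:ℝ) < (t+2)^3 := by positivity
    rw [sub_nonneg, div_le_div_iff₀ h2 ht']
    nlinarith [sq_nonneg (t-1), ht'.le]

private lemma phi_nonneg {t : ℝ} (ht : 0 ≤ t) : 0 ≤ phi t := by
  rcases eq_or_lt_of_le ht with h | ht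
  · simp [phi, ← h]
    norm_num
  rcases le_or_gt 1 t with h1 | h1
  · -- t ≥ 1
    have hmono : MonotoneOn phi (Set.Ici (1:ℝ)) := by
      apply monotoneOn_of_hasDerivWithinAt_nonneg (f' := phi') (convex_Ici 1)
      · exact fun x hx => (hasDerivAt_phi (lt_of_lt_of_le one_pos hx)).continuousAt.continuousWithinAt
      · intro x hx
        rw [interior_Ici] at hx
        exact (hasDerivAt_phi (lt_trans one_pos hx)).hasDerivWithinAt
      · intro x hx
        rw [interior_Ici] at hx
        have := phi'_mono (Set.mem_Ioi.2 one_pos) (Set.mem_Ioi.2 (lt_trans one_pos hx)) hx.le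
        rw [phi'_one] at this
        exact this
    have := hmono (Set.mem_Ici.2 le_rfl) (Set.mem_Ici.2 h1) h1
    rwa [phi_one] at this
  · -- 0 < t < 1
    have hanti : AntitoneOn phi (Set.Ioc (0:ℝ) 1) := by
      apply antitoneOn_of_hasDerivWithinAt_nonpos (f' := phi') (convex_Ioc 0 1)
      · exact fun x hx => (hasDerivAt_phi hx.1).continuousAt.continuousWithinAt
      · intro x hx
        rw [interior_Ioc] at hx
        exact (hasDerivAt_phi hx.1).hasDerivWithinAt
      · intro x hx
        rw [interior_Ioc] at hx
        have := phi'_mono (Set.mem_Ioi.2 hx.1) (Set.mem_Ioi.2 one_pos) hx.2.le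
        rw [phi'_one] at this
        exact this
    have := hanti (Set.mem_Ioc.2 ⟨ht, h1.le⟩) (Set.mem_Ioc.2 ⟨one_pos, le_rfl⟩) h1.le
    rwa [phi_one] at this

private lemma aux_log {t : ℝ} (ht : 0 ≤ t) :
    3*(t-1)^2/(2*(t+2)) ≤ t * Real.log t - t + 1 := by
  have := phi_nonneg ht
  unfold phi at this
  linarith

private lemma aux_jensen {ι : Type*} [Fintype ι] (l x : ι → ℝ) (hl : ∀ k, 0 ≤ l k)
    (hx : ∀ k, 0 ≤ x k) (hsum : ∑ k, l k ≤ 1) :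
    ∑ k, l k * Real.sqrt (x k) ≤ Real.sqrt (∑ k, l k * x k) := by
  have h0 : 0 ≤ ∑ k, l k * x k := Finset.sum_nonneg fun k _ => mul_nonneg (hl k) (hx k)
  have hcs : (∑ k, l k * Real.sqrt (x k))^2 ≤ (∑ k, l k) * ∑ k, l k * x k := by
    apply Finset.sum_sq_le_sum_mul_sum_of_sq_eq_mul
    · exact fun k _ => hl k
    · exact fun k _ => mul_nonneg (hl k) (hx k)
    · intro k _
      rw [mul_pow, Real.sq_sqrt (hx k)]
      ring
  have h1 : (∑ k, l k * Real.sqrt (x k))^2 ≤ ∑ k, l k * x k := by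
    calc (∑ k, l k * Real.sqrt (x k))^2 ≤ (∑ k, l k) * ∑ k, l k * x k := hcs
    _ ≤ 1 * ∑ k, l k * x k := by apply mul_le_mul_of_nonneg_right hsum h0
    _ = ∑ k, l k * x k := one_mul _
  have h2 : 0 ≤ ∑ k, l k * Real.sqrt (x k) :=
    Finset.sum_nonneg fun k _ => mul_nonneg (hl k) (Real.sqrt_nonneg _)
  rw [← Real.sqrt_sq h2]
  exact Real.sqrt_le_sqrt h1

private lemma aux_pinsker {S : Type*} [Fintype S] [Nonempty S] (q : S → ℝ)
    (hq : ∀ s, 0 ≤ q s) (hsum : ∑ s, q s = 1) :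
    (1/2) * ∑ s, |q s - 1/(Fintype.card S : ℝ)| ≤
      Real.sqrt ((1/2) * ∑ s, q s * Real.log (q s * (Fintype.card S : ℝ))) := by
  have hN0 : 0 < (Fintype.card S : ℝ) := by exact_mod_cast Fintype.card_pos (α := S)
  have hNne : (Fintype.card S : ℝ) ≠ 0 := hN0.ne'
  set N : ℝ := (Fintype.card S : ℝ)
  have hu0 : (0:ℝ) < 1/N := by positivity
  have hsums : ∑ _s : S, (1/N : ℝ) = 1 := by
    rw [Finset.sum_const, Finset.card_univ, nsmul_eq_mul]
    field_simp
    rfl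
  have hpt : ∀ s, 3*(q s - 1/N)^2/(2*(q s + 2*(1/N))) + q s - 1/N ≤ q s * Real.log (q s * N) := by
    intro s
    have ht := aux_log (t := q s * N) (mul_nonneg (hq s) hN0.le)
    have h1 : (1/N) * (q s * N * Real.log (q s * N) - q s * N + 1)
        = q s * Real.log (q s * N) - q s + 1/N := by
      field_simp
    have hd : (0:ℝ) < q s * N + 2 := by nlinarith [mul_nonneg (hq s) hN0.le]
    have h2 : (1/N) * (3*(q s * N - 1)^2/(2*(q s * N + 2)))
        = 3*(q s - 1/N)^2/(2*(q s + 2*(1/N))) := by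
      field_simp
    nlinarith [mul_le_mul_of_nonneg_left ht hu0.le]
  have hKLnn : ∀ s, 0 ≤ 3*(q s - 1/N)^2/(2*(q s + 2*(1/N))) := by
    intro s
    have h : (0:ℝ) < q s + 2*(1/N) := by have := hq s; linarith
    exact div_nonneg (by positivity) (by linarith)
  have hsum2 : ∑ s, 3*(q s - 1/N)^2/(2*(q s + 2*(1/N))) ≤ ∑ s, q s * Real.log (q s * N) := by
    have h := Finset.sum_le_sum (fun s (_ : s ∈ Finset.univ) => hpt s)
    rw [Finset.sum_sub_distrib, Finset.sum_add_distrib, hsum, hsums] at h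
    linarith
  have hcs : (∑ s, |q s - 1/N|)^2
      ≤ (∑ s, 3*(q s - 1/N)^2/(2*(q s + 2*(1/N)))) * (∑ s, 2*(q s + 2*(1/N))/3) := by
    apply Finset.sum_sq_le_sum_mul_sum_of_sq_eq_mul
    · exact fun s _ => hKLnn s
    · intro s _
      have h : (0:ℝ) < q s + 2*(1/N) := by have := hq s; linarith
      exact div_nonneg (by linarith) (by norm_num)
    · intro s _
      have hd : (0:ℝ) < q s + 2*(1/N) := by have := hq s; linarith
      have hd3 : (2*(q s + 2*(1/N)))*3 ≠ 0 := by positivity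
      rw [sq_abs, div_mul_div_comm, eq_div_iff hd3]
      ring
  have hg : ∑ s, 2*(q s + 2*(1/N))/3 = 2 := by
    have : ∀ s ∈ Finset.univ, 2*(q s + 2*(1/N))/3 = (2/3) * q s + (4/3) * (1/N) := by
      intro s _; ring
    rw [Finset.sum_congr rfl this, Finset.sum_add_distrib, ← Finset.mul_sum, ← Finset.mul_sum,
      hsum, hsums]
    norm_num
  have hKL0 : 0 ≤ ∑ s, q s * Real.log (q s * N) :=
    le_trans (Finset.sum_nonneg fun s _ => hKLnn s) hsum2
  have hTV0 : 0 ≤ (1/2) * ∑ s, |q s - 1/N| := by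
    have : 0 ≤ ∑ s, |q s - 1/N| := Finset.sum_nonneg fun s _ => abs_nonneg _
    linarith
  have hfin : ((1/2) * ∑ s, |q s - 1/N|)^2 ≤ (1/2) * ∑ s, q s * Real.log (q s * N) := by
    calc ((1/2) * ∑ s, |q s - 1/N|)^2 = (∑ s, |q s - 1/N|)^2 / 4 := by ring
      _ ≤ (∑ s, 3*(q s - 1/N)^2/(2*(q s + 2*(1/N)))) * 2 / 4 := by rw [hg] at hcs; linarith
      _ = (1/2) * ∑ s, 3*(q s - 1/N)^2/(2*(q s + 2*(1/N))) := by ring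
      _ ≤ (1/2) * ∑ s, q s * Real.log (q s * N) := by linarith
  calc (1/2) * ∑ s, |q s - 1/N| = Real.sqrt (((1/2) * ∑ s, |q s - 1/N|)^2) :=
        (Real.sqrt_sq hTV0).symm
    _ ≤ _ := Real.sqrt_le_sqrt hfin

private lemma aux_kl_nonneg {S : Type*} [Fintype S] [Nonempty S] (q : S → ℝ)
    (hq : ∀ s, 0 ≤ q s) (hsum : ∑ s, q s = 1) :
    0 ≤ ∑ s, q s * Real.log (q s * (Fintype.card S : ℝ)) := by
  have hN0 : 0 < (Fintype.card S : ℝ) := by exact_mod_cast Fintype.card_pos (α := S)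
  have hNne : (Fintype.card S : ℝ) ≠ 0 := hN0.ne'
  set N : ℝ := (Fintype.card S : ℝ)
  have hu0 : (0:ℝ) < 1/N := by positivity
  have hsums : ∑ _s : S, (1/N : ℝ) = 1 := by
    rw [Finset.sum_const, Finset.card_univ, nsmul_eq_mul]
    field_simp
    rfl
  have hpt : ∀ s, 3*(q s - 1/N)^2/(2*(q s + 2*(1/N))) + q s - 1/N ≤ q s * Real.log (q s * N) := by
    intro s
    have ht := aux_log (t := q s * N) (mul_nonneg (hq s) hN0.le)
    have h1 : (1/N) * (q s * N * Real.log (q s * N) - q s * N + 1)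
        = q s * Real.log (q s * N) - q s + 1/N := by
      field_simp
    have hd : (0:ℝ) < q s * N + 2 := by nlinarith [mul_nonneg (hq s) hN0.le]
    have h2 : (1/N) * (3*(q s * N - 1)^2/(2*(q s * N + 2)))
        = 3*(q s - 1/N)^2/(2*(q s + 2*(1/N))) := by
      field_simp
    nlinarith [mul_le_mul_of_nonneg_left ht hu0.le]
  have hKLnn : ∀ s, 0 ≤ 3*(q s - 1/N)^2/(2*(q s + 2*(1/N))) := by
    intro s
    have h : (0:ℝ) < q s + 2*(1/N) := by have := hq s; linarith
    exact div_nonneg (by positivity) (by linarith)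
  have h := Finset.sum_le_sum (fun s (_ : s ∈ Finset.univ) => hpt s)
  rw [Finset.sum_sub_distrib, Finset.sum_add_distrib, hsum, hsums] at h
  have h0 : 0 ≤ ∑ s, 3*(q s - 1/N)^2/(2*(q s + 2*(1/N))) :=
    Finset.sum_nonneg fun s _ => hKLnn s
  linarith

private noncomputable def Apre {Ω S : Type*} [MeasurableSpace Ω] (μ : Measure Ω)
    {m : ℕ} (X : Ω → Fin m → S) (D : Set Ω) (i : ℕ) (w : Fin i → S) : ℝ :=
  (μ (D ∩ {ω | ∀ (j : Fin i) (h : (j : ℕ) < m), X ω ⟨j, h⟩ = w j})).toReal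

private lemma Apre_eq {Ω S : Type*} [MeasurableSpace Ω] [Fintype S] [MeasurableSpace S]
    [MeasurableSingletonClass S] (μ : Measure Ω) [IsProbabilityMeasure μ]
    {m : ℕ} (X : Ω → Fin m → S) (hX : Measurable X) (D : Set Ω) (hD : MeasurableSet D)
    (i : ℕ) (hi : i ≤ m) (w : Fin i → S) :
    Apre μ X D i w = ∑ v : Fin m → S,
      (if ∀ j : Fin i, v ⟨(j : ℕ), lt_of_lt_of_le j.isLt hi⟩ = w j
       then (μ (D ∩ {ω | X ω = v})).toReal else 0) := by
  classical
  have hmeas : ∀ v : Fin m → S, MeasurableSet (D ∩ {ω | X ω = v}) := fun v =>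
    hD.inter (hX (measurableSet_singleton v))
  set P : (Fin m → S) → Prop := fun v => ∀ j : Fin i, v ⟨(j : ℕ), lt_of_lt_of_le j.isLt hi⟩ = w j
    with hP
  have hset : D ∩ {ω | ∀ (j : Fin i) (h : (j : ℕ) < m), X ω ⟨j, h⟩ = w j}
      = ⋃ v ∈ Finset.univ.filter P, D ∩ {ω | X ω = v} := by
    ext ω
    simp only [Set.mem_iUnion, Finset.mem_filter, Finset.mem_univ, true_and, Set.mem_inter_iff,
      Set.mem_setOf_eq, exists_prop]
    constructor
    · rintro ⟨hωD, hpref⟩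
      exact ⟨X ω, fun j => hpref j (lt_of_lt_of_le j.isLt hi), hωD, rfl⟩
    · rintro ⟨v, hv, hωD, hXv⟩
      refine ⟨hωD, fun j h => ?_⟩
      rw [hXv]
      exact hv j
  have hdisj : (↑(Finset.univ.filter P) : Set (Fin m → S)).PairwiseDisjoint
      (fun v => D ∩ {ω | X ω = v}) := by
    intro v _ v' _ hne
    apply Set.disjoint_left.2
    rintro ω ⟨_, h1⟩ ⟨_, h2⟩
    exact hne (h1.symm.trans h2)
  rw [Apre, hset, measure_biUnion_finset hdisj (fun v _ => hmeas v),
    ENNReal.toReal_sum (fun v _ => measure_ne_top μ _), Finset.sum_filter]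

private lemma Apre_step {Ω S : Type*} [MeasurableSpace Ω] [Fintype S] [MeasurableSpace S]
    [MeasurableSingletonClass S] (μ : Measure Ω) [IsProbabilityMeasure μ]
    {m : ℕ} (X : Ω → Fin m → S) (hX : Measurable X) (D : Set Ω) (hD : MeasurableSet D)
    (i : ℕ) (hi : i + 1 ≤ m) (w : Fin i → S) :
    ∑ s : S, Apre μ X D (i+1) (Fin.snoc w s) = Apre μ X D i w := by
  classical
  have him : i < m := hi
  have hi' : i ≤ m := le_of_lt him
  have hrw := fun (s : S) => Apre_eq μ X hX D hD (i+1) hi (Fin.snoc w s)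
  rw [Finset.sum_congr rfl (fun s _ => hrw s), Apre_eq μ X hX D hD i hi', Finset.sum_comm]
  apply Finset.sum_congr rfl
  intro v _
  have hiff : ∀ s : S,
      (∀ j : Fin (i+1), v ⟨(j : ℕ), lt_of_lt_of_le j.isLt hi⟩ = (Fin.snoc w s : Fin (i+1) → S) j)
      ↔ ((∀ j : Fin i, v ⟨(j : ℕ), lt_of_lt_of_le j.isLt hi'⟩ = w j) ∧ v ⟨i, him⟩ = s) := by
    intro s
    constructor
    · intro h
      refine ⟨fun j => ?_, ?_⟩
      · have := h j.castSucc
        rwa [Fin.snoc_castSucc] at this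
      · have := h (Fin.last i)
        rwa [Fin.snoc_last] at this
    · rintro ⟨h1, h2⟩ j
      refine Fin.lastCases ?_ ?_ j
      · rw [Fin.snoc_last]; exact h2
      · intro j'
        rw [Fin.snoc_castSucc]
        exact h1 j'
  simp only [hiff]
  by_cases hC : ∀ j : Fin i, v ⟨(j : ℕ), lt_of_lt_of_le j.isLt hi'⟩ = w j
  · simp [hC, Finset.sum_ite_eq]
  · simp [hC]

private lemma Apre_sum {Ω S : Type*} [MeasurableSpace Ω] [Fintype S] [MeasurableSpace S]
    [MeasurableSingletonClass S] (μ : Measure Ω) [IsProbabilityMeasure μ]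
    {m : ℕ} (X : Ω → Fin m → S) (hX : Measurable X) (D : Set Ω) (hD : MeasurableSet D)
    (i : ℕ) (hi : i ≤ m) :
    ∑ w : Fin i → S, Apre μ X D i w = (μ D).toReal := by
  classical
  rw [Finset.sum_congr rfl (fun w _ => Apre_eq μ X hX D hD i hi w), Finset.sum_comm]
  have hv : ∀ v : Fin m → S,
      (∑ w : Fin i → S, if ∀ j : Fin i, v ⟨(j : ℕ), lt_of_lt_of_le j.isLt hi⟩ = w j
        then (μ (D ∩ {ω | X ω = v})).toReal else 0) = (μ (D ∩ {ω | X ω = v})).toReal := by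
    intro v
    have : ∀ w : Fin i → S,
        (∀ j : Fin i, v ⟨(j : ℕ), lt_of_lt_of_le j.isLt hi⟩ = w j) ↔
        ((fun j : Fin i => v ⟨(j : ℕ), lt_of_lt_of_le j.isLt hi⟩) = w) := by
      intro w; rw [funext_iff]
    simp only [this]
    rw [Finset.sum_ite_eq Finset.univ]
    simp
  rw [Finset.sum_congr rfl (fun v _ => hv v)]
  -- now ∑ v, μ(D ∩ {X = v}) = μ D
  have hset : D = ⋃ v ∈ (Finset.univ : Finset (Fin m → S)), D ∩ {ω | X ω = v} := by
    ext ω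
    simp only [Set.mem_iUnion, Finset.mem_univ, true_and, Set.mem_inter_iff, Set.mem_setOf_eq,
      exists_prop]
    exact ⟨fun h => ⟨X ω, h, rfl⟩, fun ⟨v, h, _⟩ => h⟩
  have hdisj : (↑(Finset.univ : Finset (Fin m → S)) : Set (Fin m → S)).PairwiseDisjoint
      (fun v => D ∩ {ω | X ω = v}) := by
    intro v _ v' _ hne
    apply Set.disjoint_left.2
    rintro ω ⟨_, h1⟩ ⟨_, h2⟩
    exact hne (h1.symm.trans h2)
  conv_rhs => rw [hset]
  rw [measure_biUnion_finset hdisj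
      (fun v _ => hD.inter (hX (measurableSet_singleton v))),
    ENNReal.toReal_sum (fun v _ => measure_ne_top μ _)]

private lemma Apre_last {Ω S : Type*} [MeasurableSpace Ω] [Fintype S] [MeasurableSpace S]
    [MeasurableSingletonClass S] (μ : Measure Ω) [IsProbabilityMeasure μ]
    {m : ℕ} (X : Ω → Fin m → S) (D : Set Ω) (v : Fin m → S) :
    Apre μ X D m v = (μ (D ∩ {ω | X ω = v})).toReal := by
  have hseteq : {ω | ∀ (j : Fin m) (h : (j : ℕ) < m), X ω ⟨(j : ℕ), h⟩ = v j}
      = {ω | X ω = v} := by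
    ext ω
    simp only [Set.mem_setOf_eq]
    constructor
    · intro h
      funext j
      have := h j j.isLt
      simpa using this
    · intro h j hj
      rw [h]
  rw [Apre, hseteq]

private lemma Apre_zero {Ω S : Type*} [MeasurableSpace Ω] [Fintype S] [MeasurableSpace S]
    [MeasurableSingletonClass S] (μ : Measure Ω) [IsProbabilityMeasure μ]
    {m : ℕ} (X : Ω → Fin m → S) (D : Set Ω) (w : Fin 0 → S) :
    Apre μ X D 0 w = (μ D).toReal := by
  rw [Apre]
  have : {ω | ∀ (j : Fin 0) (h : (j : ℕ) < m), X ω ⟨(j : ℕ), h⟩ = w j} = Set.univ := by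
    ext ω
    simp only [Set.mem_setOf_eq, Set.mem_univ, iff_true]
    exact fun j => j.elim0
  rw [this, Set.inter_univ]

set_option maxHeartbeats 1000000 in
theorem stmt4 {Ω : Type*} [MeasurableSpace Ω] (μ : Measure Ω) [IsProbabilityMeasure μ]
    {S : Type*} [Fintype S] [Nonempty S] [MeasurableSpace S] [MeasurableSingletonClass S]
    {m : ℕ} (hm : 0 < m)
    (X : Ω → Fin m → S) (hX : Measurable X)
    (hunif : ∀ v : Fin m → S, (μ {ω | X ω = v}).toReal = 1 / (Fintype.card S : ℝ) ^ m)
    (D : Set Ω) (hD : MeasurableSet D)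
    (ε : ℝ) (hε : 0 < ε) (hDε : ε ≤ (μ D).toReal) :
    (1 / m) * ∑ i : Fin m, ∑ w : Fin i.val → S,
        ((μ (D ∩ {ω | ∀ j : Fin i.val,
            X ω ⟨j.val, j.isLt.trans i.isLt⟩ = w j})).toReal / (μ D).toReal) *
        ((1 / 2) * ∑ s : S,
          |(μ (D ∩ {ω | (∀ j : Fin i.val,
              X ω ⟨j.val, j.isLt.trans i.isLt⟩ = w j) ∧ X ω i = s})).toReal /
             (μ (D ∩ {ω | ∀ j : Fin i.val,
              X ω ⟨j.val, j.isLt.trans i.isLt⟩ = w j})).toReal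
           - 1 / (Fintype.card S : ℝ)|)
    ≤ Real.sqrt (Real.logb 2 (1 / ε) / (2 * m)) := by
  classical
  have hN0 : (0:ℝ) < (Fintype.card S : ℝ) := by exact_mod_cast Fintype.card_pos (α := S)
  have hμD0 : (0:ℝ) < (μ D).toReal := lt_of_lt_of_le hε hDε
  have hμD1 : (μ D).toReal ≤ 1 := by
    calc (μ D).toReal ≤ (μ Set.univ).toReal :=
          ENNReal.toReal_mono (measure_ne_top μ _) (measure_mono (Set.subset_univ D))
      _ = 1 := by simp
  have hε1 : ε ≤ 1 := le_trans hDε hμD1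
  have hm0 : (0:ℝ) < (m:ℝ) := by exact_mod_cast hm
  have hA0 : ∀ (i : ℕ) (w : Fin i → S), 0 ≤ Apre μ X D i w := fun i w => ENNReal.toReal_nonneg
  have hAstep : ∀ (i : ℕ), i + 1 ≤ m → ∀ w : Fin i → S,
      ∑ s : S, Apre μ X D (i+1) (Fin.snoc w s) = Apre μ X D i w :=
    fun i hi w => Apre_step μ X hX D hD i hi w
  have hAsum : ∀ (i : ℕ), i ≤ m → ∑ w : Fin i → S, Apre μ X D i w = (μ D).toReal :=
    fun i hi => Apre_sum μ X hX D hD i hi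
  -- rewrite goal in terms of Apre
  have hE1 : ∀ (i : Fin m) (w : Fin i.val → S),
      (μ (D ∩ {ω | ∀ j : Fin i.val, X ω ⟨j.val, j.isLt.trans i.isLt⟩ = w j})).toReal
        = Apre μ X D i.val w := by
    intro i w
    rw [Apre]
    have hset : {ω | ∀ (j : Fin i.val) (h : (j : ℕ) < m), X ω ⟨(j : ℕ), h⟩ = w j}
        = {ω | ∀ j : Fin i.val, X ω ⟨j.val, j.isLt.trans i.isLt⟩ = w j} := by
      ext ω
      simp only [Set.mem_setOf_eq]
      exact ⟨fun h j => h j _, fun h j hj => h j⟩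
    rw [hset]
  have hE2 : ∀ (i : Fin m) (w : Fin i.val → S) (s : S),
      (μ (D ∩ {ω | (∀ j : Fin i.val, X ω ⟨j.val, j.isLt.trans i.isLt⟩ = w j) ∧ X ω i = s})).toReal
        = Apre μ X D (i.val+1) (Fin.snoc w s) := by
    intro i w s
    rw [Apre]
    have hset : {ω | ∀ (j : Fin (i.val+1)) (h : (j : ℕ) < m),
          X ω ⟨(j : ℕ), h⟩ = (Fin.snoc w s : Fin (i.val+1) → S) j}
        = {ω | (∀ j : Fin i.val, X ω ⟨j.val, j.isLt.trans i.isLt⟩ = w j) ∧ X ω i = s} := by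
      ext ω
      simp only [Set.mem_setOf_eq]
      constructor
      · intro h
        refine ⟨fun j => ?_, ?_⟩
        · have := h j.castSucc (lt_trans j.isLt i.isLt)
          rwa [Fin.snoc_castSucc] at this
        · have := h (Fin.last i.val) i.isLt
          rwa [Fin.snoc_last] at this
      · rintro ⟨h1, h2⟩ j
        induction j using Fin.lastCases with
        | last => intro hj; rw [Fin.snoc_last]; exact h2
        | cast j' => intro hj; rw [Fin.snoc_castSucc]; exact h1 j'
    rw [hset]
  -- basic facts about p
  have hpsum : ∑ v : Fin m → S, (μ (D ∩ {ω | X ω = v})).toReal = (μ D).toReal := by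
    rw [← hAsum m le_rfl]
    exact (Finset.sum_congr rfl (fun v _ => (Apre_last μ X D v).symm))
  have hple : ∀ v : Fin m → S,
      (μ (D ∩ {ω | X ω = v})).toReal ≤ 1/(Fintype.card S : ℝ)^m := by
    intro v
    rw [← hunif v]
    exact ENNReal.toReal_mono (measure_ne_top μ _) (measure_mono Set.inter_subset_right)
  -- reindexing sums over tuples
  have hreindex : ∀ (i : ℕ) (g : (Fin (i+1) → S) → ℝ),
      ∑ w : Fin i → S, ∑ s : S, g (Fin.snoc w s) = ∑ w' : Fin (i+1) → S, g w' := by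
    intro i g
    have hbij : Function.Bijective
        (fun p : (Fin i → S) × S => (Fin.snoc p.1 p.2 : Fin (i+1) → S)) := by
      constructor
      · rintro ⟨w1, s1⟩ ⟨w2, s2⟩ h
        have h1 := congrArg Fin.init h
        rw [Fin.init_snoc, Fin.init_snoc] at h1
        have h2 := congrArg (fun f : Fin (i+1) → S => f (Fin.last i)) h
        simp only [Fin.snoc_last] at h2
        exact Prod.ext h1 h2
      · intro w'
        exact ⟨(Fin.init w', w' (Fin.last i)), Fin.snoc_init_self w'⟩
    rw [← Fintype.sum_bijective _ hbij (fun p : (Fin i → S) × S => g (Fin.snoc p.1 p.2)) g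
      (fun p => rfl), Fintype.sum_prod_type]
  -- the chain rule / telescoping bound
  have htel : ∑ i ∈ Finset.range m, (∑ w : Fin i → S, ∑ s : S,
        Apre μ X D (i+1) (Fin.snoc w s) *
          Real.log (Apre μ X D (i+1) (Fin.snoc w s) * (Fintype.card S : ℝ) / Apre μ X D i w))
      ≤ (μ D).toReal * Real.log (1/ε) := by
    have hlogsplit : ∀ (i : ℕ), i + 1 ≤ m → ∀ w : Fin i → S,
        ∑ s : S, Apre μ X D (i+1) (Fin.snoc w s) *
            Real.log (Apre μ X D (i+1) (Fin.snoc w s) * (Fintype.card S : ℝ) / Apre μ X D i w)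
        = (∑ s : S, Apre μ X D (i+1) (Fin.snoc w s) *
              Real.log (Apre μ X D (i+1) (Fin.snoc w s)))
          + Apre μ X D i w * Real.log (Fintype.card S : ℝ)
          - Apre μ X D i w * Real.log (Apre μ X D i w) := by
      intro i hi w
      by_cases hA : 0 < Apre μ X D i w
      · have hz : ∀ s : S, Apre μ X D (i+1) (Fin.snoc w s) *
              Real.log (Apre μ X D (i+1) (Fin.snoc w s) * (Fintype.card S : ℝ) / Apre μ X D i w)
            = Apre μ X D (i+1) (Fin.snoc w s) * Real.log (Apre μ X D (i+1) (Fin.snoc w s))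
              + Apre μ X D (i+1) (Fin.snoc w s) * Real.log (Fintype.card S : ℝ)
              - Apre μ X D (i+1) (Fin.snoc w s) * Real.log (Apre μ X D i w) := by
          intro s
          rcases eq_or_lt_of_le (hA0 (i+1) (Fin.snoc w s)) with h0 | hpos
          · simp [← h0]
          · rw [Real.log_div (by positivity) hA.ne', Real.log_mul hpos.ne' hN0.ne']
            ring
        rw [Finset.sum_congr rfl (fun s _ => hz s), Finset.sum_sub_distrib,
          Finset.sum_add_distrib, ← Finset.sum_mul, ← Finset.sum_mul, hAstep i hi w]
      · have hAz : Apre μ X D i w = 0 := le_antisymm (not_lt.1 hA) (hA0 i w)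
        have hz : ∀ s : S, Apre μ X D (i+1) (Fin.snoc w s) = 0 := by
          intro s
          have hsum0 := hAstep i hi w
          rw [hAz] at hsum0
          exact (Finset.sum_eq_zero_iff_of_nonneg (fun s _ => hA0 _ _)).1 hsum0 s
            (Finset.mem_univ s)
        simp [hz, hAz]
    have hstep : ∀ i ∈ Finset.range m,
        (∑ w : Fin i → S, ∑ s : S,
          Apre μ X D (i+1) (Fin.snoc w s) *
            Real.log (Apre μ X D (i+1) (Fin.snoc w s) * (Fintype.card S : ℝ) / Apre μ X D i w))
        = ((∑ w' : Fin (i+1) → S, Apre μ X D (i+1) w' * Real.log (Apre μ X D (i+1) w'))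
            - (∑ w : Fin i → S, Apre μ X D i w * Real.log (Apre μ X D i w)))
          + (μ D).toReal * Real.log (Fintype.card S : ℝ) := by
      intro i hi
      have hi' : i + 1 ≤ m := Finset.mem_range.1 hi
      rw [Finset.sum_congr rfl (fun w _ => hlogsplit i hi' w), Finset.sum_sub_distrib,
        Finset.sum_add_distrib,
        hreindex i (fun w' => Apre μ X D (i+1) w' * Real.log (Apre μ X D (i+1) w')),
        ← Finset.sum_mul, hAsum i (le_of_lt hi')]
      ring
    rw [Finset.sum_congr rfl hstep, Finset.sum_add_distrib, Finset.sum_range_sub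
      (fun n => ∑ w : Fin n → S, Apre μ X D n w * Real.log (Apre μ X D n w)),
      Finset.sum_const, Finset.card_range, nsmul_eq_mul]
    -- endpoints
    have hGm : (∑ w : Fin m → S, Apre μ X D m w * Real.log (Apre μ X D m w))
        ≤ -((m:ℝ) * ((μ D).toReal * Real.log (Fintype.card S : ℝ))) := by
      have hpt : ∀ v : Fin m → S, Apre μ X D m v * Real.log (Apre μ X D m v)
          ≤ Apre μ X D m v * (-((m:ℝ) * Real.log (Fintype.card S : ℝ))) := by
        intro v
        rcases eq_or_lt_of_le (hA0 m v) with h0 | hpos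
        · simp [← h0]
        · apply mul_le_mul_of_nonneg_left _ (hA0 m v)
          have hle : Apre μ X D m v ≤ 1/(Fintype.card S : ℝ)^m := by
            rw [Apre_last]; exact hple v
          calc Real.log (Apre μ X D m v) ≤ Real.log (1/(Fintype.card S : ℝ)^m) :=
                (Real.log_le_log_iff hpos (by positivity)).2 hle
            _ = -((m:ℝ) * Real.log (Fintype.card S : ℝ)) := by
                rw [one_div, Real.log_inv, Real.log_pow]
      calc (∑ w : Fin m → S, Apre μ X D m w * Real.log (Apre μ X D m w))
          ≤ ∑ v : Fin m → S, Apre μ X D m v * (-((m:ℝ) * Real.log (Fintype.card S : ℝ))) :=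
            Finset.sum_le_sum (fun v _ => hpt v)
        _ = -((m:ℝ) * ((μ D).toReal * Real.log (Fintype.card S : ℝ))) := by
            rw [← Finset.sum_mul, hAsum m le_rfl]; ring
    have hG0 : (∑ w : Fin 0 → S, Apre μ X D 0 w * Real.log (Apre μ X D 0 w))
        = (μ D).toReal * Real.log ((μ D).toReal) := by
      rw [Fintype.sum_unique]
      rw [Apre_zero]
    rw [hG0]
    have hlogfin : -((μ D).toReal * Real.log ((μ D).toReal)) ≤ (μ D).toReal * Real.log (1/ε) := by
      have h1 : Real.log (1/(μ D).toReal) ≤ Real.log (1/ε) :=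
        (Real.log_le_log_iff (by positivity) (by positivity)).2
          (one_div_le_one_div_of_le hε hDε)
      have h2 : -((μ D).toReal * Real.log ((μ D).toReal))
          = (μ D).toReal * Real.log (1/(μ D).toReal) := by
        rw [one_div, Real.log_inv]; ring
      rw [h2]
      exact mul_le_mul_of_nonneg_left h1 hμD0.le
    linarith [hGm]
  -- conditional KL quantities
  set KK : (i : ℕ) → (Fin i → S) → ℝ := fun i w =>
    if 0 < Apre μ X D i w then
      (1/2) * ∑ s : S, (Apre μ X D (i+1) (Fin.snoc w s) / Apre μ X D i w) *
        Real.log ((Apre μ X D (i+1) (Fin.snoc w s) / Apre μ X D i w) * (Fintype.card S : ℝ))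
    else 0 with hKK
  have hKnn : ∀ (i : ℕ), i + 1 ≤ m → ∀ w : Fin i → S, 0 ≤ KK i w := by
    intro i hi w
    simp only [hKK]
    by_cases hA : 0 < Apre μ X D i w
    · rw [if_pos hA]
      have := aux_kl_nonneg (fun s => Apre μ X D (i+1) (Fin.snoc w s) / Apre μ X D i w)
        (fun s => div_nonneg (hA0 _ _) hA.le)
        (by rw [← Finset.sum_div, hAstep i hi w, div_self hA.ne'])
      linarith
    · rw [if_neg hA]
  have hpinsker : ∀ (i : Fin m) (w : Fin i.val → S),
      (Apre μ X D i.val w / (μ D).toReal) * ((1/2) * ∑ s : S,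
        |Apre μ X D (i.val+1) (Fin.snoc w s) / Apre μ X D i.val w - 1/(Fintype.card S : ℝ)|)
      ≤ (Apre μ X D i.val w / (μ D).toReal) * Real.sqrt (KK i.val w) := by
    intro i w
    by_cases hA : 0 < Apre μ X D i.val w
    · apply mul_le_mul_of_nonneg_left _ (div_nonneg (hA0 _ _) hμD0.le)
      simp only [hKK, if_pos hA]
      exact aux_pinsker (fun s => Apre μ X D (i.val+1) (Fin.snoc w s) / Apre μ X D i.val w)
        (fun s => div_nonneg (hA0 _ _) hA.le)
        (by rw [← Finset.sum_div, hAstep i.val i.isLt w, div_self hA.ne'])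
    · have h0 : Apre μ X D i.val w = 0 := le_antisymm (not_lt.1 hA) (hA0 _ _)
      simp [h0]
  have hpoint : ∀ (i : Fin m) (w : Fin i.val → S),
      ((1/(m:ℝ)) * (Apre μ X D i.val w / (μ D).toReal)) * KK i.val w
      = (1/(2*(m:ℝ)*(μ D).toReal)) * ∑ s : S, Apre μ X D (i.val+1) (Fin.snoc w s) *
          Real.log (Apre μ X D (i.val+1) (Fin.snoc w s) * (Fintype.card S : ℝ)
            / Apre μ X D i.val w) := by
    intro i w
    by_cases hA : 0 < Apre μ X D i.val w
    · simp only [hKK, if_pos hA]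
      rw [Finset.mul_sum, Finset.mul_sum, Finset.mul_sum]
      apply Finset.sum_congr rfl
      intro s _
      rw [div_mul_eq_mul_div (Apre μ X D (i.val+1) (Fin.snoc w s)) (Apre μ X D i.val w)
        (Fintype.card S : ℝ)]
      field_simp
    · have h0 : Apre μ X D i.val w = 0 := le_antisymm (not_lt.1 hA) (hA0 _ _)
      have hz : ∀ s : S, Apre μ X D (i.val+1) (Fin.snoc w s) = 0 := by
        intro s
        have hsum0 := hAstep i.val i.isLt w
        rw [h0] at hsum0
        exact (Finset.sum_eq_zero_iff_of_nonneg (fun s _ => hA0 _ _)).1 hsum0 s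
          (Finset.mem_univ s)
      simp [hKK, h0, hz]
  have hKsum : ∑ x : (Σ i : Fin m, (Fin i.val → S)),
      ((1/(m:ℝ)) * (Apre μ X D x.1.val x.2 / (μ D).toReal)) * KK x.1.val x.2
      ≤ Real.log (1/ε) / (2*(m:ℝ)) := by
    rw [← Finset.univ_sigma_univ, Finset.sum_sigma]
    calc ∑ i : Fin m, ∑ w : Fin i.val → S,
          ((1/(m:ℝ)) * (Apre μ X D i.val w / (μ D).toReal)) * KK i.val w
        = ∑ i : Fin m, ∑ w : Fin i.val → S, (1/(2*(m:ℝ)*(μ D).toReal)) *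
            ∑ s : S, Apre μ X D (i.val+1) (Fin.snoc w s) *
              Real.log (Apre μ X D (i.val+1) (Fin.snoc w s) * (Fintype.card S : ℝ)
                / Apre μ X D i.val w) :=
          Finset.sum_congr rfl (fun i _ => Finset.sum_congr rfl (fun w _ => hpoint i w))
      _ = (1/(2*(m:ℝ)*(μ D).toReal)) * ∑ i ∈ Finset.range m, ∑ w : Fin i → S, ∑ s : S,
            Apre μ X D (i+1) (Fin.snoc w s) *
              Real.log (Apre μ X D (i+1) (Fin.snoc w s) * (Fintype.card S : ℝ)
                / Apre μ X D i w) := by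
          simp_rw [← Finset.mul_sum]
          rw [Fin.sum_univ_eq_sum_range (fun n => ∑ w : Fin n → S, ∑ s : S,
            Apre μ X D (n+1) (Fin.snoc w s) *
              Real.log (Apre μ X D (n+1) (Fin.snoc w s) * (Fintype.card S : ℝ)
                / Apre μ X D n w)) m]
      _ ≤ (1/(2*(m:ℝ)*(μ D).toReal)) * ((μ D).toReal * Real.log (1/ε)) :=
          mul_le_mul_of_nonneg_left htel (by positivity)
      _ = Real.log (1/ε) / (2*(m:ℝ)) := by
          field_simp
  calc (1 / (m:ℝ)) * ∑ i : Fin m, ∑ w : Fin i.val → S,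
        ((μ (D ∩ {ω | ∀ j : Fin i.val,
            X ω ⟨j.val, j.isLt.trans i.isLt⟩ = w j})).toReal / (μ D).toReal) *
        ((1 / 2) * ∑ s : S,
          |(μ (D ∩ {ω | (∀ j : Fin i.val,
              X ω ⟨j.val, j.isLt.trans i.isLt⟩ = w j) ∧ X ω i = s})).toReal /
             (μ (D ∩ {ω | ∀ j : Fin i.val,
              X ω ⟨j.val, j.isLt.trans i.isLt⟩ = w j})).toReal
           - 1 / (Fintype.card S : ℝ)|)
      = (1/(m:ℝ)) * ∑ i : Fin m, ∑ w : Fin i.val → S,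
          (Apre μ X D i.val w / (μ D).toReal) * ((1/2) * ∑ s : S,
            |Apre μ X D (i.val+1) (Fin.snoc w s) / Apre μ X D i.val w
              - 1/(Fintype.card S : ℝ)|) := by
        congr 1
        refine Finset.sum_congr rfl (fun i _ => Finset.sum_congr rfl (fun w _ => ?_))
        simp only [hE1 i, hE2 i]
    _ ≤ (1/(m:ℝ)) * ∑ i : Fin m, ∑ w : Fin i.val → S,
          (Apre μ X D i.val w / (μ D).toReal) * Real.sqrt (KK i.val w) := by
        apply mul_le_mul_of_nonneg_left _ (by positivity)
        exact Finset.sum_le_sum (fun i _ => Finset.sum_le_sum (fun w _ => hpinsker i w))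
    _ = ∑ x : (Σ i : Fin m, (Fin i.val → S)),
          ((1/(m:ℝ)) * (Apre μ X D x.1.val x.2 / (μ D).toReal)) * Real.sqrt (KK x.1.val x.2) := by
        rw [← Finset.univ_sigma_univ, Finset.sum_sigma, Finset.mul_sum]
        refine Finset.sum_congr rfl (fun i _ => ?_)
        rw [Finset.mul_sum]
        refine Finset.sum_congr rfl (fun w _ => ?_)
        ring
    _ ≤ Real.sqrt (∑ x : (Σ i : Fin m, (Fin i.val → S)),
          ((1/(m:ℝ)) * (Apre μ X D x.1.val x.2 / (μ D).toReal)) * KK x.1.val x.2) := by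
        apply aux_jensen
        · intro x
          exact mul_nonneg (by positivity) (div_nonneg (hA0 _ _) hμD0.le)
        · intro x
          exact hKnn x.1.val x.1.isLt x.2
        · rw [← Finset.univ_sigma_univ, Finset.sum_sigma]
          have hlam : ∀ i : Fin m, ∑ w : Fin i.val → S,
              ((1/(m:ℝ)) * (Apre μ X D i.val w / (μ D).toReal)) = 1/(m:ℝ) := by
            intro i
            rw [← Finset.mul_sum, ← Finset.sum_div, hAsum i.val (le_of_lt i.isLt),
              div_self hμD0.ne', mul_one]
          rw [Finset.sum_congr rfl (fun i _ => hlam i), Finset.sum_const, Finset.card_univ,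
            Fintype.card_fin, nsmul_eq_mul, mul_one_div, div_self hm0.ne']
    _ ≤ Real.sqrt (Real.log (1/ε) / (2*(m:ℝ))) := Real.sqrt_le_sqrt hKsum
    _ ≤ Real.sqrt (Real.logb 2 (1/ε) / (2*(m:ℝ))) := by
        apply Real.sqrt_le_sqrt
        have hl2 : (0:ℝ) < Real.log 2 := Real.log_pos (by norm_num)
        have hl2' : Real.log 2 ≤ 1 := le_trans Real.log_two_lt_d9.le (by norm_num)
        have hlognn : 0 ≤ Real.log (1/ε) := Real.log_nonneg (one_le_one_div hε hε1)
        have hle : Real.log (1/ε) ≤ Real.logb 2 (1/ε) := by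
          rw [Real.logb, le_div_iff₀ hl2]
          exact mul_le_of_le_one_right hlognn hl2'
        gcongr
end

section
/- Let m be a positive integer and let Z = (Z_1,…,Z_m) be a random vector taking values in {0,1}^m with arbitrary joint distribution. Let η > 0, ε ∈ (0,1), and let D be any event on the same probability space such that D ⊆ {Σ_{i=1}^m Z_i ≤ ηm} and Pr(D) ≥ ε. Set β = √(2 ln(2/ε)/m). Then Pr( (1/m) Σ_{i=1}^m E[Z_i | Z_1,…,Z_{i−1}] > η + β | D ) ≤ 1/2, where E[Z_i | Z_1,…,Z_{i−1}] denotes the conditional expectation of Z_i given the first i−1 coordinates (with respect to the unconditioned distribution of Z). -/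
lemma twoPoint (p t : ℝ) (hp0 : 0 ≤ p) (hp1 : p ≤ 1) :
    p * Real.exp (t*(p-1)) + (1-p) * Real.exp (t*p) ≤ Real.exp (t^2/2) := by
  have key : ∀ x : ℝ, -1 ≤ x → x ≤ 1 →
      Real.exp (t*x) ≤ ((1+x)/2) * Real.exp t + ((1-x)/2) * Real.exp (-t) := by
    intro x h1 h2
    have h := convexOn_exp.2 (Set.mem_univ t) (Set.mem_univ (-t))
      (by linarith : (0:ℝ) ≤ (1+x)/2) (by linarith : (0:ℝ) ≤ (1-x)/2) (by ring)
    simp only [smul_eq_mul] at h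
    have : ((1+x)/2) * t + ((1-x)/2) * (-t) = t * x := by ring
    rwa [this] at h
  have h1 := key (p-1) (by linarith) (by linarith)
  have h2 := key p (by linarith) (by linarith)
  have hc : p * Real.exp (t*(p-1)) + (1-p) * Real.exp (t*p) ≤ Real.cosh t := by
    rw [Real.cosh_eq]
    nlinarith [Real.exp_pos t, Real.exp_pos (-t), mul_le_mul_of_nonneg_left h1 hp0,
      mul_le_mul_of_nonneg_left h2 (by linarith : (0:ℝ) ≤ 1-p)]
  exact hc.trans (Real.cosh_le_exp_half_sq t)

open scoped Classical BigOperators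
open Finset

section FinAzuma
variable {m : ℕ}

def χb : Bool → ℝ := fun b => if b then 1 else 0

def preF (k : ℕ) (u : Fin m → Bool) : Finset (Fin m → Bool) :=
  univ.filter (fun z => ∀ j : Fin m, (j:ℕ) < k → z j = u j)

variable (w : (Fin m → Bool) → ℝ)

def Wf (k : ℕ) (u : Fin m → Bool) : ℝ := ∑ z ∈ preF k u, w z
def Nf (i : Fin m) (u : Fin m → Bool) : ℝ :=
  ∑ z ∈ (preF (i:ℕ) u).filter (fun z => z i = true), w z
noncomputable def pf (i : Fin m) (u : Fin m → Bool) : ℝ := Nf w i u / Wf w (i:ℕ) u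

noncomputable def Mf (t : ℝ) (k : ℕ) (u : Fin m → Bool) : ℝ :=
  ∏ i ∈ univ.filter (fun i : Fin m => (i:ℕ) < k), Real.exp (t * (pf w i u - χb (u i)))

lemma preF_congr {k : ℕ} {u v : Fin m → Bool} (h : ∀ j : Fin m, (j:ℕ) < k → u j = v j) :
    preF k u = preF k v := by
  ext z; simp only [preF, mem_filter, mem_univ, true_and]
  constructor <;> intro hz j hj
  · rw [hz j hj, h j hj]
  · rw [hz j hj, h j hj]

lemma pf_congr {i : Fin m} {u v : Fin m → Bool} (h : ∀ j : Fin m, (j:ℕ) < (i:ℕ) → u j = v j) :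
    pf w i u = pf w i v := by
  unfold pf Nf Wf; rw [preF_congr h]

lemma Mf_congr {t : ℝ} {k : ℕ} {u v : Fin m → Bool} (h : ∀ j : Fin m, (j:ℕ) < k → u j = v j) :
    Mf w t k u = Mf w t k v := by
  unfold Mf
  refine Finset.prod_congr rfl (fun i hi => ?_)
  simp only [mem_filter, mem_univ, true_and] at hi
  rw [pf_congr w (fun j hj => h j (hj.trans hi)), h i hi]

lemma Mf_nonneg (t : ℝ) (k : ℕ) (u : Fin m → Bool) : 0 ≤ Mf w t k u :=
  Finset.prod_nonneg (fun _ _ => (Real.exp_pos _).le)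

lemma Mf_succ (t : ℝ) (k : ℕ) (hk : k < m) (u : Fin m → Bool) :
    Mf w t (k+1) u = Mf w t k u * Real.exp (t * (pf w ⟨k,hk⟩ u - χb (u ⟨k,hk⟩))) := by
  unfold Mf
  have hset : univ.filter (fun i : Fin m => (i:ℕ) < k+1)
      = insert ⟨k,hk⟩ (univ.filter (fun i : Fin m => (i:ℕ) < k)) := by
    ext i
    simp only [mem_filter, mem_univ, true_and, mem_insert, Fin.ext_iff]
    omega
  rw [hset, Finset.prod_insert (by simp), mul_comm]

lemma stepT (hw : ∀ u, 0 ≤ w u) (t : ℝ) (k : ℕ) (hk : k < m) :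
    ∑ u, w u * Mf w t (k+1) u ≤ Real.exp (t^2/2) * ∑ u, w u * Mf w t k u := by
  set i : Fin m := ⟨k, hk⟩ with hi
  set π : (Fin m → Bool) → (Fin m → Bool) :=
    fun u j => if (j:ℕ) < k then u j else false with hπ
  have hagree : ∀ u v : Fin m → Bool, π u = v → ∀ j : Fin m, (j:ℕ) < k → u j = v j := by
    intro u v huv j hj
    rw [← huv]; simp [hπ, hj]
  have hmaps : ∀ u : Fin m → Bool, u ∈ (univ : Finset (Fin m → Bool)) → π u ∈ univ :=
    fun _ _ => mem_univ _
  rw [← Finset.sum_fiberwise_of_maps_to hmaps (fun u => w u * Mf w t (k+1) u),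
    ← Finset.sum_fiberwise_of_maps_to hmaps (fun u => w u * Mf w t k u), Finset.mul_sum]
  refine Finset.sum_le_sum (fun v _ => ?_)
  -- rewrite each summand in the fiber
  have hLHS : ∀ u ∈ univ.filter (fun u => π u = v),
      w u * Mf w t (k+1) u
        = (Mf w t k v * Real.exp (t * pf w i v)) * (w u * Real.exp (-(t * χb (u i)))) := by
    intro u hu
    simp only [mem_filter, mem_univ, true_and] at hu
    have hag := hagree u v hu
    rw [Mf_succ w t k hk u, Mf_congr w hag, pf_congr w (fun j hj => hag j hj),
      show t * (pf w i v - χb (u i)) = t * pf w i v + -(t * χb (u i)) by ring, Real.exp_add]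
    ring
  have hRHS : ∀ u ∈ univ.filter (fun u => π u = v),
      w u * Mf w t k u = Mf w t k v * w u := by
    intro u hu
    simp only [mem_filter, mem_univ, true_and] at hu
    rw [Mf_congr w (hagree u v hu)]; ring
  rw [Finset.sum_congr rfl hLHS, Finset.sum_congr rfl hRHS, ← Finset.mul_sum, ← Finset.mul_sum]
  -- if the fiber is empty, both sides are 0
  rcases Finset.eq_empty_or_nonempty (univ.filter (fun u => π u = v)) with he | ⟨u0, hu0⟩
  · rw [he]; simp
  -- fiber is nonempty: it equals preF k v
  simp only [mem_filter, mem_univ, true_and] at hu0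
  have hπv : π v = v := by
    funext j; rw [← hu0, hπ]; by_cases hj : (j:ℕ) < k <;> simp [hj]
  have hfiber : univ.filter (fun u => π u = v) = preF k v := by
    ext u
    simp only [mem_filter, mem_univ, true_and, preF]
    constructor
    · intro h; exact hagree u v h
    · intro h; funext j
      by_cases hj : (j:ℕ) < k
      · rw [hπ]; simp only [hj, if_true]; exact h j hj
      · have : π v j = v j := congrFun hπv j
        rw [hπ] at this ⊢; simp only [hj, if_false] at this ⊢
        try exact this
  rw [hfiber]
  -- compute the inner sum
  have hsplit : ∑ u ∈ preF k v, w u * Real.exp (-(t * χb (u i)))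
      = Nf w i v * Real.exp (-t) + (Wf w k v - Nf w i v) := by
    rw [← Finset.sum_filter_add_sum_filter_not (preF k v) (fun u => u i = true)]
    have h1 : ∀ u ∈ (preF k v).filter (fun u => u i = true),
        w u * Real.exp (-(t * χb (u i))) = w u * Real.exp (-t) := by
      intro u hu
      simp only [mem_filter] at hu
      rw [hu.2]; simp [χb]
    have h2 : ∀ u ∈ (preF k v).filter (fun u => ¬ u i = true),
        w u * Real.exp (-(t * χb (u i))) = w u := by
      intro u hu
      simp only [mem_filter] at hu
      have : u i = false := by simpa using hu.2
      rw [this]; simp [χb]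
    rw [Finset.sum_congr rfl h1, Finset.sum_congr rfl h2, ← Finset.sum_mul]
    have hN : ∑ u ∈ (preF k v).filter (fun u => u i = true), w u = Nf w i v := by
      unfold Nf; rfl
    have hWsplit : Nf w i v + ∑ u ∈ (preF k v).filter (fun u => ¬ u i = true), w u
        = Wf w k v := by
      rw [← hN]
      exact Finset.sum_filter_add_sum_filter_not (preF k v) (fun u => u i = true) w
    rw [hN]
    linarith
  rw [hsplit]
  -- now the scalar inequality
  set N := Nf w i v with hNdef
  set W := Wf w k v with hWdef
  have hN0 : 0 ≤ N := Finset.sum_nonneg (fun u _ => hw u)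
  have hNW : N ≤ W := by
    apply Finset.sum_le_sum_of_subset_of_nonneg (Finset.filter_subset _ _)
    intro u _ _; exact hw u
  have hW0 : 0 ≤ W := hN0.trans hNW
  have hp : pf w i v = N / W := by rw [pf]
  have key : Real.exp (t * pf w i v) * (N * Real.exp (-t) + (W - N))
      ≤ Real.exp (t^2/2) * W := by
    rcases eq_or_lt_of_le hW0 with hW | hW
    · have hNz : N = 0 := le_antisymm (hNW.trans hW.symm.le) hN0
      rw [hNz, ← hW]
      simp
    · set p := N / W with hpdef
      have hp0 : 0 ≤ p := div_nonneg hN0 hW0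
      have hp1 : p ≤ 1 := (div_le_one hW).mpr hNW
      have htp := twoPoint p t hp0 hp1
      have hWp : W * p = N := by rw [hpdef]; field_simp
      have hexp : Real.exp (t * p) * (N * Real.exp (-t) + (W - N))
          = W * (p * Real.exp (t*(p-1)) + (1-p) * Real.exp (t*p)) := by
        rw [show t*(p-1) = t*p + -t by ring, Real.exp_add, ← hWp]
        ring
      rw [hp, hexp]
      calc W * (p * Real.exp (t*(p-1)) + (1-p) * Real.exp (t*p))
          ≤ W * Real.exp (t^2/2) := by
            apply mul_le_mul_of_nonneg_left htp hW0
        _ = Real.exp (t^2/2) * W := mul_comm _ _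
  calc Mf w t k v * Real.exp (t * pf w i v) * (N * Real.exp (-t) + (W - N))
      = Mf w t k v * (Real.exp (t * pf w i v) * (N * Real.exp (-t) + (W - N))) := by ring
    _ ≤ Mf w t k v * (Real.exp (t^2/2) * W) :=
        mul_le_mul_of_nonneg_left key (Mf_nonneg w t k v)
    _ = Real.exp (t^2/2) * (Mf w t k v * W) := by ring
    _ = Real.exp (t^2/2) * (Mf w t k v * ∑ u ∈ preF k v, w u) := rfl


lemma Mf_zero (t : ℝ) (u : Fin m → Bool) : Mf w t 0 u = 1 := by
  unfold Mf; simp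

lemma iterT (hw : ∀ u, 0 ≤ w u) (t : ℝ) :
    ∀ k, k ≤ m → ∑ u, w u * Mf w t k u ≤ Real.exp (k * (t^2/2)) * ∑ u, w u := by
  intro k
  induction k with
  | zero =>
    intro _
    simp [Mf_zero]
  | succ k ih =>
    intro hk1
    have hk : k < m := hk1
    have h1 := stepT w hw t k hk
    have h2 := ih (le_of_lt hk)
    have h3 : Real.exp (t^2/2) * ∑ u, w u * Mf w t k u
        ≤ Real.exp (t^2/2) * (Real.exp (k * (t^2/2)) * ∑ u, w u) :=
      mul_le_mul_of_nonneg_left h2 (Real.exp_pos _).le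
    refine h1.trans (h3.trans_eq ?_)
    rw [← mul_assoc, ← Real.exp_add]
    congr 2
    push_cast
    ring

lemma azuma_fin (hw : ∀ u, 0 ≤ w u) (β : ℝ) (hβ : 0 ≤ β) :
    ∑ u ∈ univ.filter (fun u : Fin m → Bool =>
        β * m ≤ ∑ i : Fin m, (pf w i u - χb (u i))), w u
      ≤ Real.exp (-(β^2 * m)/2) * ∑ u, w u := by
  set S := ∑ u, w u with hS
  set bad := univ.filter (fun u : Fin m → Bool =>
      β * m ≤ ∑ i : Fin m, (pf w i u - χb (u i))) with hbad
  have hMf_eq : ∀ u : Fin m → Bool,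
      Mf w β m u = Real.exp (β * ∑ i : Fin m, (pf w i u - χb (u i))) := by
    intro u
    unfold Mf
    rw [← Real.exp_sum]
    congr 1
    rw [Finset.mul_sum]
    apply Finset.sum_congr
    · ext i; simp [i.isLt]
    · intro i _; rfl
  have hchain : Real.exp (β^2 * m) * ∑ u ∈ bad, w u ≤ Real.exp (m * (β^2/2)) * S := by
    rw [Finset.mul_sum]
    calc ∑ u ∈ bad, Real.exp (β^2 * m) * w u
        ≤ ∑ u ∈ bad, w u * Mf w β m u := by
          apply Finset.sum_le_sum
          intro u hu
          simp only [hbad, mem_filter, mem_univ, true_and] at hu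
          have : Real.exp (β^2 * m) ≤ Mf w β m u := by
            rw [hMf_eq u]
            apply Real.exp_le_exp.mpr
            calc β^2 * m = β * (β * m) := by ring
              _ ≤ β * ∑ i : Fin m, (pf w i u - χb (u i)) :=
                  mul_le_mul_of_nonneg_left hu hβ
          calc Real.exp (β^2 * m) * w u = w u * Real.exp (β^2 * m) := mul_comm _ _
            _ ≤ w u * Mf w β m u := mul_le_mul_of_nonneg_left this (hw u)
      _ ≤ ∑ u, w u * Mf w β m u := by
          apply Finset.sum_le_sum_of_subset_of_nonneg (Finset.subset_univ _)
          intro u _ _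
          exact mul_nonneg (hw u) (Mf_nonneg w β m u)
      _ ≤ Real.exp (m * (β^2/2)) * S := iterT w hw β m le_rfl
  have hA : (0:ℝ) < Real.exp (β^2 * m) := Real.exp_pos _
  have h2 : ∑ u ∈ bad, w u ≤ Real.exp (m * (β^2/2)) * S / Real.exp (β^2 * m) := by
    rw [le_div_iff₀ hA, mul_comm]
    exact hchain
  calc ∑ u ∈ bad, w u ≤ Real.exp (m * (β^2/2)) * S / Real.exp (β^2 * m) := h2
    _ = Real.exp (m * (β^2/2)) / Real.exp (β^2 * m) * S := by ring
    _ = Real.exp (m * (β^2/2) - β^2 * m) * S := by rw [Real.exp_sub]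
    _ = Real.exp (-(β^2 * m)/2) * S := by
        rw [show m * (β^2/2) - β^2 * m = -(β^2 * m)/2 by ring]

end FinAzuma
open MeasureTheory

section Bridge
variable {Ω : Type*} [MeasurableSpace Ω] (μ : Measure Ω) [IsProbabilityMeasure μ]
  {m : ℕ} (Z : Ω → Fin m → Bool)

lemma count_lemma (hZ : Measurable Z) (A : Finset (Fin m → Bool)) :
    (μ (Z ⁻¹' ↑A)).toReal = ∑ u ∈ A, (μ {ω | Z ω = u}).toReal := by
  have hsets : ∀ u : Fin m → Bool, {ω | Z ω = u} = Z ⁻¹' {u} := by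
    intro u; ext ω; simp [Set.mem_preimage]
  have hum : Z ⁻¹' ↑A = ⋃ u ∈ A, {ω | Z ω = u} := by
    ext ω; simp [Set.mem_preimage]
  rw [hum, measure_biUnion_finset ?_ ?_]
  · exact ENNReal.toReal_sum (fun u _ => measure_ne_top μ _)
  · intro u _ v _ huv
    rw [Function.onFun, hsets, hsets]
    exact Set.disjoint_left.mpr (fun ω h1 h2 => huv (by
      simp only [Set.mem_preimage, Set.mem_singleton_iff] at h1 h2
      rw [← h1, ← h2]))
  · intro u _
    rw [hsets]
    exact hZ MeasurableSet.of_discrete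
end Bridge

open MeasureTheory

theorem stmt6 {Ω : Type*} [MeasurableSpace Ω] (μ : Measure Ω) [IsProbabilityMeasure μ]
    {m : ℕ} (hm : 0 < m)
    (Z : Ω → Fin m → Bool) (hZ : Measurable Z)
    (η ε : ℝ) (hη : 0 < η) (hε0 : 0 < ε) (hε1 : ε < 1)
    (D : Set Ω) (hDm : MeasurableSet D)
    (hDsub : D ⊆
      {ω | ((Finset.univ.filter (fun i : Fin m => Z ω i = true)).card : ℝ) ≤ η * m})
    (hDε : ε ≤ (μ D).toReal) :
    (μ (D ∩ {ω | η + Real.sqrt (2 * Real.log (2 / ε) / m) <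
        (1 / m) * ∑ i : Fin m,
          (μ {ω' | (∀ j : Fin m, j < i → Z ω' j = Z ω j) ∧ Z ω' i = true}).toReal /
            (μ {ω' | ∀ j : Fin m, j < i → Z ω' j = Z ω j}).toReal})).toReal /
      (μ D).toReal ≤ 1 / 2 := by
  have hm' : (0:ℝ) < m := by exact_mod_cast hm
  set β := Real.sqrt (2 * Real.log (2 / ε) / m) with hβdef
  have hβ0 : 0 ≤ β := Real.sqrt_nonneg _
  have hlog : 0 ≤ Real.log (2/ε) := Real.log_nonneg (by rw [le_div_iff₀ hε0]; linarith)
  have harg : 0 ≤ 2 * Real.log (2/ε) / m := by positivity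
  have hβsq : β^2 = 2 * Real.log (2/ε) / m := Real.sq_sqrt harg
  set w : (Fin m → Bool) → ℝ := fun u => (μ {ω | Z ω = u}).toReal with hwdef
  have hwnn : ∀ u, 0 ≤ w u := fun u => ENNReal.toReal_nonneg
  have hcount : ∀ A : Finset (Fin m → Bool), (μ (Z ⁻¹' ↑A)).toReal = ∑ u ∈ A, w u :=
    fun A => count_lemma μ Z hZ A
  have hsum1 : ∑ u, w u = 1 := by
    have h := hcount Finset.univ
    rw [Finset.coe_univ, Set.preimage_univ, measure_univ, ENNReal.toReal_one] at h
    exact h.symm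
  have hWfeq : ∀ (ω : Ω) (i : Fin m),
      (μ {ω' | ∀ j : Fin m, j < i → Z ω' j = Z ω j}).toReal = Wf w (i:ℕ) (Z ω) := by
    intro ω i
    have hset : {ω' | ∀ j : Fin m, j < i → Z ω' j = Z ω j}
        = Z ⁻¹' ↑(preF (i:ℕ) (Z ω)) := by
      ext ω'
      simp only [Set.mem_setOf_eq, Set.mem_preimage, Finset.mem_coe, preF,
        Finset.mem_filter, Finset.mem_univ, true_and, Fin.lt_def]
    rw [hset, hcount]; rfl
  have hNfeq : ∀ (ω : Ω) (i : Fin m),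
      (μ {ω' | (∀ j : Fin m, j < i → Z ω' j = Z ω j) ∧ Z ω' i = true}).toReal
        = Nf w i (Z ω) := by
    intro ω i
    have hset : {ω' | (∀ j : Fin m, j < i → Z ω' j = Z ω j) ∧ Z ω' i = true}
        = Z ⁻¹' ↑((preF (i:ℕ) (Z ω)).filter (fun z => z i = true)) := by
      ext ω'
      simp only [Set.mem_setOf_eq, Set.mem_preimage, Finset.mem_coe, preF,
        Finset.mem_filter, Finset.mem_univ, true_and, Fin.lt_def]
    rw [hset, hcount]; rfl
  have hsub : D ∩ {ω | η + β <
        (1 / m) * ∑ i : Fin m,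
          (μ {ω' | (∀ j : Fin m, j < i → Z ω' j = Z ω j) ∧ Z ω' i = true}).toReal /
            (μ {ω' | ∀ j : Fin m, j < i → Z ω' j = Z ω j}).toReal}
      ⊆ Z ⁻¹' ↑(Finset.univ.filter (fun u : Fin m → Bool =>
          β * m ≤ ∑ i : Fin m, (pf w i u - χb (u i)))) := by
    rintro ω ⟨hωD, hωA⟩
    simp only [Set.mem_setOf_eq] at hωA
    have hsum_eq : ∀ i : Fin m,
        (μ {ω' | (∀ j : Fin m, j < i → Z ω' j = Z ω j) ∧ Z ω' i = true}).toReal /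
            (μ {ω' | ∀ j : Fin m, j < i → Z ω' j = Z ω j}).toReal = pf w i (Z ω) := by
      intro i; rw [hNfeq, hWfeq]; rfl
    rw [Finset.sum_congr rfl (fun i _ => hsum_eq i)] at hωA
    have hcard := hDsub hωD
    simp only [Set.mem_setOf_eq] at hcard
    have hχ : ∑ i : Fin m, χb (Z ω i)
        = ((Finset.univ.filter (fun i : Fin m => Z ω i = true)).card : ℝ) := by
      simp [χb, Finset.sum_boole]
    simp only [Set.mem_preimage, Finset.coe_filter, Set.mem_setOf_eq, Finset.mem_univ,
      true_and]
    rw [Finset.sum_sub_distrib]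
    rw [show (1:ℝ)/m * ∑ i : Fin m, pf w i (Z ω) = (∑ i : Fin m, pf w i (Z ω)) / m
      by ring, lt_div_iff₀ hm'] at hωA
    linarith
  have hmain : (μ (D ∩ {ω | η + β <
        (1 / m) * ∑ i : Fin m,
          (μ {ω' | (∀ j : Fin m, j < i → Z ω' j = Z ω j) ∧ Z ω' i = true}).toReal /
            (μ {ω' | ∀ j : Fin m, j < i → Z ω' j = Z ω j}).toReal})).toReal ≤ ε/2 := by
    have h1 := ENNReal.toReal_mono (measure_ne_top μ _) (measure_mono hsub)
    rw [hcount] at h1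
    have h2 := azuma_fin w hwnn β hβ0
    rw [hsum1, mul_one] at h2
    have h3 : Real.exp (-(β^2*m)/2) = ε/2 := by
      rw [hβsq, show -(2 * Real.log (2/ε) / m * m)/2 = -Real.log (2/ε) by field_simp,
        Real.exp_neg, Real.exp_log (by positivity), inv_div]
    linarith
  have hDpos : 0 < (μ D).toReal := lt_of_lt_of_le hε0 hDε
  rw [div_le_iff₀ hDpos]
  calc (μ (D ∩ _)).toReal ≤ ε/2 := hmain
    _ ≤ (μ D).toReal/2 := by linarith
    _ = 1/2 * (μ D).toReal := by ring
end

section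
/- Let d_A, d_B be positive integers and δ, ν, η > 0. For each x ∈ {0,1,2} and y ∈ {0,1}, let ρ^{xy} be a density matrix on ℂ^{d_A} ⊗ ℂ^{d_B}. Let ρ_A := (1/6) Σ_{x,y} Tr_B(ρ^{xy}) and ρ_B := (1/6) Σ_{x,y} Tr_A(ρ^{xy}). Suppose: (1) (1/6) Σ_{x,y} ‖ρ_A − Tr_B(ρ^{xy})‖₁ ≤ ν and (1/6) Σ_{x,y} ‖ρ_B − Tr_A(ρ^{xy})‖₁ ≤ ν; (2) there exist, for each x ∈ {0,1,2}, positive semidefinite matrices A_x^0, A_x^1 on ℂ^{d_A} with A_x^0 + A_x^1 = Id, and for each y ∈ {0,1}, positive semidefinite matrices B_y^0, B_y^1 on ℂ^{d_B} with B_y^0 + B_y^1 = Id, such that, writing A_x := A_x^0 − A_x^1 and B_y := B_y^0 − B_y^1, one has (1/4)( Tr((A_0 ⊗ B_0) ρ^{00}) + Tr((A_0 ⊗ B_1) ρ^{01}) + Tr((A_1 ⊗ B_0) ρ^{10}) − Tr((A_1 ⊗ B_1) ρ^{11}) ) ≥ √2/2 − η; and (3) there exists b₁ ∈ {0,1} such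 that Tr((Id ⊗ B_1^{b₁}) ρ^{21}) ≥ 1 − δ. Then δ ≥ ( (√2 − 1)/2 − η ) − 75ν. -/
open scoped Classical BigOperators Kronecker ComplexOrder
open Matrix

/-- Partial trace over the second tensor factor. -/
noncomputable def ptraceB {dA dB : ℕ}
    (ρ : Matrix (Fin dA × Fin dB) (Fin dA × Fin dB) ℂ) : Matrix (Fin dA) (Fin dA) ℂ :=
  fun i j => ∑ k : Fin dB, ρ (i, k) (j, k)

/-- Partial trace over the first tensor factor. -/
noncomputable def ptraceA {dA dB : ℕ}
    (ρ : Matrix (Fin dA × Fin dB) (Fin dA × Fin dB) ℂ) : Matrix (Fin dB) (Fin dB) ℂ :=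
  fun i j => ∑ k : Fin dA, ρ (k, i) (k, j)

/-- The trace norm (Schatten 1-norm) of a complex square matrix: `Tr √(M M†)`. -/
noncomputable def traceNorm {n : Type*} [Fintype n] [DecidableEq n]
    (M : Matrix n n ℂ) : ℝ :=
  ((((Matrix.posSemidef_self_mul_conjTranspose M).1.eigenvectorUnitary : Matrix n n ℂ)
      * Matrix.diagonal (fun i => ((√((Matrix.posSemidef_self_mul_conjTranspose M).1.eigenvalues i) : ℝ) : ℂ))
      * (star (Matrix.posSemidef_self_mul_conjTranspose M).1.eigenvectorUnitary : Matrix n n ℂ)).trace).re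

set_option linter.unusedSectionVars false
set_option linter.unusedVariables false

section GuessHelpers
variable {n m : Type*} [Fintype n] [DecidableEq n] [Fintype m] [DecidableEq m]

lemma psd_trace_re_nonneg {M : Matrix n n ℂ} (hM : M.PosSemidef) : 0 ≤ M.trace.re := by
  have h : ∀ i, 0 ≤ (M i i).re := by
    intro i
    have := hM.re_dotProduct_nonneg (Pi.single i 1)
    simpa [dotProduct, mulVec, Pi.single_apply, Finset.mul_sum, Finset.sum_ite_eq] using this
  rw [Matrix.trace]
  simp only [Matrix.diag, Complex.re_sum]
  exact Finset.sum_nonneg fun i _ => h i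

open scoped MatrixOrder in
lemma trace_mul_psd_nonneg {M ρ : Matrix n n ℂ} (hM : M.PosSemidef) (hρ : ρ.PosSemidef) :
    0 ≤ ((M * ρ).trace).re := by
  have hS := (CFC.sqrt_nonneg M).posSemidef
  have h1 : M * ρ = CFC.sqrt M * (CFC.sqrt M * ρ) := by
    rw [← Matrix.mul_assoc, CFC.sqrt_mul_sqrt_self M hM.nonneg]
  have h2 : ((M * ρ).trace) = (CFC.sqrt M * ρ * CFC.sqrt M).trace := by
    rw [h1, Matrix.trace_mul_comm, Matrix.mul_assoc]
  rw [h2]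
  have h3 : (CFC.sqrt M * ρ * CFC.sqrt M).PosSemidef := by
    have := hρ.mul_mul_conjTranspose_same (CFC.sqrt M)
    rwa [hS.isHermitian.eq] at this
  exact psd_trace_re_nonneg h3

open scoped MatrixOrder in
lemma traceNorm_eq_sqrt (M : Matrix n n ℂ) :
    traceNorm M = ((CFC.sqrt (M * Mᴴ)).trace).re := by
  rw [CFC.sqrt_eq_real_sqrt _ (Matrix.posSemidef_self_mul_conjTranspose M).nonneg, cfcₙ_eq_cfc,
    (Matrix.posSemidef_self_mul_conjTranspose M).1.cfc_eq]
  rfl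

open scoped MatrixOrder in
lemma hermitian_decomp {X : Matrix n n ℂ} (hX : X.IsHermitian) :
    ∃ P Q : Matrix n n ℂ, P.PosSemidef ∧ Q.PosSemidef ∧ X = P - Q ∧
      traceNorm X = P.trace.re + Q.trace.re := by
  have hST := hX.spectral_theorem
  rw [Unitary.conjStarAlgAut_apply] at hST
  set U : Matrix n n ℂ := (hX.eigenvectorUnitary : Matrix n n ℂ) with hUdef
  set d : n → ℝ := hX.eigenvalues with hddef
  have hUstar : star U * U = 1 := Matrix.mem_unitaryGroup_iff'.mp hX.eigenvectorUnitary.2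
  have hcoe : ∀ r : ℝ, (RCLike.ofReal r : ℂ) = (r : ℂ) := fun r => rfl
  set P : Matrix n n ℂ := U * diagonal (fun i => ((max (d i) 0 : ℝ) : ℂ)) * star U with hPdef
  set Q : Matrix n n ℂ := U * diagonal (fun i => ((max (-(d i)) 0 : ℝ) : ℂ)) * star U with hQdef
  have hdiagPSD : ∀ f : n → ℝ, (∀ i, 0 ≤ f i) →
      (U * diagonal (fun i => ((f i : ℝ) : ℂ)) * star U).PosSemidef := by
    intro f hf
    have h : (diagonal (fun i => ((f i : ℝ) : ℂ))).PosSemidef := by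
      refine Matrix.posSemidef_diagonal_iff.mpr fun i => ?_
      exact_mod_cast Complex.zero_le_real.mpr (hf i)
    simpa [Matrix.star_eq_conjTranspose] using h.mul_mul_conjTranspose_same U
  have hP : P.PosSemidef := hdiagPSD _ (fun i => le_max_right _ _)
  have hQ : Q.PosSemidef := hdiagPSD _ (fun i => le_max_right _ _)
  have key1 : (fun i => ((max (d i) 0 : ℝ) : ℂ) - ((max (-(d i)) 0 : ℝ) : ℂ))
      = ((RCLike.ofReal ∘ d) : n → ℂ) := by
    funext i
    rw [Function.comp_apply, hcoe, show ((max (d i) 0 : ℝ) : ℂ) - ((max (-(d i)) 0 : ℝ) : ℂ)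
        = ((max (d i) 0 - max (-(d i)) 0 : ℝ) : ℂ) by push_cast; ring]
    congr 1
    rcases le_total (d i) 0 with h | h
    · rw [max_eq_right h, max_eq_left (by linarith)]; ring
    · rw [max_eq_left h, max_eq_right (by linarith)]; ring
  have key2 : (fun i => ((max (d i) 0 : ℝ) : ℂ) + ((max (-(d i)) 0 : ℝ) : ℂ))
      = (fun i => ((|d i| : ℝ) : ℂ)) := by
    funext i
    rw [show ((max (d i) 0 : ℝ) : ℂ) + ((max (-(d i)) 0 : ℝ) : ℂ)
        = ((max (d i) 0 + max (-(d i)) 0 : ℝ) : ℂ) by push_cast; ring]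
    congr 1
    rcases le_total (d i) 0 with h | h
    · rw [max_eq_right h, max_eq_left (by linarith), abs_of_nonpos h]; ring
    · rw [max_eq_left h, max_eq_right (by linarith), abs_of_nonneg h]; ring
  have key3 : (fun i => ((|d i| : ℝ) : ℂ) * ((|d i| : ℝ) : ℂ))
      = (fun i => ((RCLike.ofReal ∘ d) : n → ℂ) i * ((RCLike.ofReal ∘ d) : n → ℂ) i) := by
    funext i
    rw [Function.comp_apply, hcoe, show ((|d i| : ℝ) : ℂ) * ((|d i| : ℝ) : ℂ)
        = ((|d i| * |d i| : ℝ) : ℂ) by push_cast; ring, ← abs_mul, abs_mul_self]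
    push_cast; ring
  have hXPQ : X = P - Q := by
    rw [hPdef, hQdef, ← Matrix.sub_mul, ← Matrix.mul_sub, Matrix.diagonal_sub, key1]
    exact hST
  have hmulUU : ∀ Y : Matrix n n ℂ, star U * (U * Y) = Y := fun Y => by
    rw [← Matrix.mul_assoc, hUstar, Matrix.one_mul]
  have hconj : ∀ f g : n → ℂ, (U * diagonal f * star U) * (U * diagonal g * star U)
      = U * diagonal (fun i => f i * g i) * star U := by
    intro f g
    simp only [Matrix.mul_assoc]
    rw [hmulUU, ← Matrix.mul_assoc (diagonal f), Matrix.diagonal_mul_diagonal]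
  have hPQsum : P + Q = U * diagonal (fun i => ((|d i| : ℝ) : ℂ)) * star U := by
    rw [hPdef, hQdef, ← Matrix.add_mul, ← Matrix.mul_add, Matrix.diagonal_add, key2]
  have hsq : (P + Q) ^ 2 = X * Xᴴ := by
    rw [hX.eq, hPQsum, pow_two, hconj, key3, ← hconj, ← hST]
  have hsqrt : traceNorm X = (P + Q).trace.re := by
    rw [traceNorm_eq_sqrt, CFC.sqrt_unique (by rw [← sq]; exact hsq) (hP.add hQ).nonneg]
  refine ⟨P, Q, hP, hQ, hXPQ, ?_⟩
  rw [hsqrt, Matrix.trace_add, Complex.add_re]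
lemma psd_sum {ι : Type*} (s : Finset ι) (f : ι → Matrix n n ℂ)
    (h : ∀ i ∈ s, (f i).PosSemidef) : (∑ i ∈ s, f i).PosSemidef := by
  classical
  induction s using Finset.induction_on with
  | empty => simpa using Matrix.PosSemidef.zero
  | insert _ _ hni ih =>
    rw [Finset.sum_insert hni]
    exact (h _ (Finset.mem_insert_self _ _)).add
      (ih fun i hi => h i (Finset.mem_insert_of_mem hi))

lemma kron_psd {A : Matrix n n ℂ} {B : Matrix m m ℂ} (hA : A.PosSemidef) (hB : B.PosSemidef) :
    (A ⊗ₖ B).PosSemidef := by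
  exact hA.kronecker hB

lemma psd_smul {A : Matrix n n ℂ} (hA : A.PosSemidef) {c : ℝ} (hc : 0 ≤ c) :
    ((c : ℂ) • A).PosSemidef := by
  have hcz : (0 : ℂ) ≤ (c : ℂ) := by exact_mod_cast Complex.zero_le_real.mpr hc
  exact hA.smul hcz

variable {dA dB : ℕ}

noncomputable def Tmat (k : Fin dA) : Matrix (Fin dB) (Fin dA × Fin dB) ℂ :=
  fun b p => if p = (k, b) then 1 else 0

noncomputable def Smat (k : Fin dB) : Matrix (Fin dA) (Fin dA × Fin dB) ℂ :=
  fun a p => if p = (a, k) then 1 else 0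

lemma ptraceA_eq_sum (ρ : Matrix (Fin dA × Fin dB) (Fin dA × Fin dB) ℂ) :
    ptraceA ρ = ∑ k : Fin dA, Tmat (dB := dB) k * ρ * (Tmat (dB := dB) k)ᴴ := by
  ext b b'
  simp only [Matrix.sum_apply, Matrix.mul_apply, Matrix.conjTranspose_apply, Tmat, ptraceA,
    ite_mul, one_mul, zero_mul, apply_ite (star : ℂ → ℂ), star_one, star_zero,
    mul_ite, mul_one, mul_zero,
    Finset.sum_ite_eq, Finset.sum_ite_eq', Finset.mem_univ, if_true]

lemma ptraceB_eq_sum (ρ : Matrix (Fin dA × Fin dB) (Fin dA × Fin dB) ℂ) :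
    ptraceB ρ = ∑ k : Fin dB, Smat (dA := dA) k * ρ * (Smat (dA := dA) k)ᴴ := by
  ext a a'
  simp only [Matrix.sum_apply, Matrix.mul_apply, Matrix.conjTranspose_apply, Smat, ptraceB,
    ite_mul, one_mul, zero_mul, apply_ite (star : ℂ → ℂ), star_one, star_zero,
    mul_ite, mul_one, mul_zero,
    Finset.sum_ite_eq, Finset.sum_ite_eq', Finset.mem_univ, if_true]

lemma ptraceA_psd {ρ : Matrix (Fin dA × Fin dB) (Fin dA × Fin dB) ℂ}
    (h : ρ.PosSemidef) : (ptraceA ρ).PosSemidef := by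
  rw [ptraceA_eq_sum]
  exact psd_sum _ _ fun k _ => h.mul_mul_conjTranspose_same _

lemma ptraceB_psd {ρ : Matrix (Fin dA × Fin dB) (Fin dA × Fin dB) ℂ}
    (h : ρ.PosSemidef) : (ptraceB ρ).PosSemidef := by
  rw [ptraceB_eq_sum]
  exact psd_sum _ _ fun k _ => h.mul_mul_conjTranspose_same _

lemma ptraceA_trace (ρ : Matrix (Fin dA × Fin dB) (Fin dA × Fin dB) ℂ) :
    (ptraceA ρ).trace = ρ.trace := by
  simp only [Matrix.trace, Matrix.diag, ptraceA, Fintype.sum_prod_type]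
  exact Finset.sum_comm

lemma ptraceB_trace (ρ : Matrix (Fin dA × Fin dB) (Fin dA × Fin dB) ℂ) :
    (ptraceB ρ).trace = ρ.trace := by
  simp only [Matrix.trace, Matrix.diag, ptraceB, Fintype.sum_prod_type]

lemma sum_Tmat_conj (B : Matrix (Fin dB) (Fin dB) ℂ) :
    ∑ k : Fin dA, (Tmat (dB := dB) k)ᴴ * B * Tmat (dB := dB) k = (1 : Matrix (Fin dA) (Fin dA) ℂ) ⊗ₖ B := by
  ext ⟨a, b⟩ ⟨c, d⟩
  simp only [Matrix.sum_apply, Matrix.mul_apply, Matrix.conjTranspose_apply, Tmat,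
    Matrix.kroneckerMap_apply, Matrix.one_apply, Prod.mk.injEq,
    apply_ite (star : ℂ → ℂ), star_one, star_zero, ite_mul, one_mul, zero_mul,
    mul_ite, mul_one, mul_zero, ite_and, Finset.sum_ite_irrel, Finset.sum_const_zero,
    Finset.sum_ite_eq, Finset.sum_ite_eq', Finset.mem_univ, if_true]

lemma sum_Smat_conj (A : Matrix (Fin dA) (Fin dA) ℂ) :
    ∑ k : Fin dB, (Smat (dA := dA) k)ᴴ * A * Smat (dA := dA) k = A ⊗ₖ (1 : Matrix (Fin dB) (Fin dB) ℂ) := by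
  ext ⟨a, b⟩ ⟨c, d⟩
  simp only [Matrix.sum_apply, Matrix.mul_apply, Matrix.conjTranspose_apply, Smat,
    Matrix.kroneckerMap_apply, Matrix.one_apply, Prod.mk.injEq,
    apply_ite (star : ℂ → ℂ), star_one, star_zero, ite_mul, one_mul, zero_mul,
    mul_ite, mul_one, mul_zero, ite_and, Finset.sum_ite_irrel, Finset.sum_const_zero,
    Finset.sum_ite_eq, Finset.sum_ite_eq', Finset.mem_univ, if_true]

lemma trace_one_kron (B : Matrix (Fin dB) (Fin dB) ℂ)
    (ρ : Matrix (Fin dA × Fin dB) (Fin dA × Fin dB) ℂ) :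
    (((1 : Matrix (Fin dA) (Fin dA) ℂ) ⊗ₖ B) * ρ).trace = (B * ptraceA ρ).trace := by
  rw [← sum_Tmat_conj, ptraceA_eq_sum, Finset.sum_mul, Matrix.mul_sum, trace_sum, trace_sum]
  refine Finset.sum_congr rfl fun k _ => ?_
  rw [Matrix.mul_assoc, Matrix.mul_assoc, Matrix.trace_mul_comm]
  simp only [Matrix.mul_assoc]

lemma trace_kron_one (A : Matrix (Fin dA) (Fin dA) ℂ)
    (ρ : Matrix (Fin dA × Fin dB) (Fin dA × Fin dB) ℂ) :
    ((A ⊗ₖ (1 : Matrix (Fin dB) (Fin dB) ℂ)) * ρ).trace = (A * ptraceB ρ).trace := by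
  rw [← sum_Smat_conj, ptraceB_eq_sum, Finset.sum_mul, Matrix.mul_sum, trace_sum, trace_sum]
  refine Finset.sum_congr rfl fun k _ => ?_
  rw [Matrix.mul_assoc, Matrix.mul_assoc, Matrix.trace_mul_comm]
  simp only [Matrix.mul_assoc]

open scoped MatrixOrder in
lemma traceNorm_eq_of {M N : Matrix n n ℂ} (h : M * Mᴴ = N * Nᴴ) :
    traceNorm M = traceNorm N := by
  rw [traceNorm_eq_sqrt, traceNorm_eq_sqrt, h]

lemma traceNorm_sub_comm (X Y : Matrix n n ℂ) (hX : X.IsHermitian) (hY : Y.IsHermitian) :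
    traceNorm (X - Y) = traceNorm (Y - X) := by
  refine traceNorm_eq_of ?_
  have h1 : (X - Y)ᴴ = X - Y := by rw [Matrix.conjTranspose_sub, hX.eq, hY.eq]
  have h2 : (Y - X)ᴴ = Y - X := by rw [Matrix.conjTranspose_sub, hX.eq, hY.eq]
  rw [h1, h2, ← neg_sub X Y, neg_mul_neg]

lemma trace_le_traceNorm {X M : Matrix n n ℂ} (hX : X.IsHermitian)
    (h1 : (1 - M).PosSemidef) (h2 : (1 + M).PosSemidef) :
    ((M * X).trace).re ≤ traceNorm X := by
  obtain ⟨P, Q, hP, hQ, hXPQ, hTN⟩ := hermitian_decomp hX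
  have e1 : 0 ≤ (((1 - M) * P).trace).re := trace_mul_psd_nonneg h1 hP
  have e2 : 0 ≤ (((1 + M) * Q).trace).re := trace_mul_psd_nonneg h2 hQ
  rw [Matrix.sub_mul, Matrix.one_mul, Matrix.trace_sub, Complex.sub_re] at e1
  rw [Matrix.add_mul, Matrix.one_mul, Matrix.trace_add, Complex.add_re] at e2
  have e3 : ((M * X).trace).re = ((M * P).trace).re - ((M * Q).trace).re := by
    rw [hXPQ, Matrix.mul_sub, Matrix.trace_sub, Complex.sub_re]
  linarith

/-- workhorse: replace the state under an observable bounded by `±1`. -/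
lemma trace_obs_diff_le {C σ τ : Matrix n n ℂ} (hHerm : (τ - σ).IsHermitian)
    (h1 : (1 - C).PosSemidef) (h2 : (1 + C).PosSemidef) :
    ((C * σ).trace).re ≤ ((C * τ).trace).re + traceNorm (τ - σ) := by
  have h := trace_le_traceNorm (M := -C) hHerm
    (by rw [sub_neg_eq_add]; exact h2) (by rw [← sub_eq_add_neg]; exact h1)
  rw [Matrix.neg_mul, Matrix.trace_neg, Complex.neg_re, Matrix.mul_sub, Matrix.trace_sub,
    Complex.sub_re] at h
  linarith

lemma sub_kron (A B : Matrix n n ℂ) (C : Matrix m m ℂ) :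
    (A - B) ⊗ₖ C = A ⊗ₖ C - B ⊗ₖ C := by
  ext ⟨i, k⟩ ⟨j, l⟩
  simp [Matrix.kroneckerMap_apply, Matrix.sub_apply, sub_mul]

lemma kron_sub (A : Matrix n n ℂ) (B C : Matrix m m ℂ) :
    A ⊗ₖ (B - C) = A ⊗ₖ B - A ⊗ₖ C := by
  ext ⟨i, k⟩ ⟨j, l⟩
  simp [Matrix.kroneckerMap_apply, Matrix.sub_apply, mul_sub]

lemma kron_add (A : Matrix n n ℂ) (B C : Matrix m m ℂ) :
    A ⊗ₖ (B + C) = A ⊗ₖ B + A ⊗ₖ C := by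
  ext ⟨i, k⟩ ⟨j, l⟩
  simp [Matrix.kroneckerMap_apply, Matrix.add_apply, mul_add]

/-- `|Tr((A ⊗ C) ρ)| ≤ Tr((1 ⊗ C) ρ)` for `-1 ≤ A ≤ 1`, `C, ρ ⪰ 0`. -/
lemma kron_obs_bound {A : Matrix n n ℂ} {C : Matrix m m ℂ} {ρ : Matrix (n × m) (n × m) ℂ}
    (h1 : (1 - A).PosSemidef) (h2 : (1 + A).PosSemidef) (hC : C.PosSemidef)
    (hρ : ρ.PosSemidef) :
    |(((A ⊗ₖ C) * ρ).trace).re| ≤ ((((1 : Matrix n n ℂ) ⊗ₖ C) * ρ).trace).re := by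
  have k1 : 0 ≤ ((((1 - A) ⊗ₖ C) * ρ).trace).re := trace_mul_psd_nonneg (kron_psd h1 hC) hρ
  have k2 : 0 ≤ ((((1 + A) ⊗ₖ C) * ρ).trace).re := trace_mul_psd_nonneg (kron_psd h2 hC) hρ
  have hadd : (1 + A) ⊗ₖ C = (1 : Matrix n n ℂ) ⊗ₖ C + A ⊗ₖ C := by
    ext ⟨i, k⟩ ⟨j, l⟩
    simp [Matrix.kroneckerMap_apply, Matrix.add_apply, add_mul]
  rw [sub_kron, Matrix.sub_mul, Matrix.trace_sub, Complex.sub_re] at k1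
  rw [hadd, Matrix.add_mul, Matrix.trace_add, Complex.add_re] at k2
  rw [abs_le]
  constructor <;> linarith

end GuessHelpers

open scoped MatrixOrder in
lemma traceNorm_nonneg {n : Type*} [Fintype n] [DecidableEq n] (M : Matrix n n ℂ) :
    0 ≤ traceNorm M := by
  rw [traceNorm_eq_sqrt]
  exact psd_trace_re_nonneg (CFC.sqrt_nonneg _).posSemidef

lemma kron_neg_neg {n m : Type*} (M : Matrix n n ℂ) (N : Matrix m m ℂ) :
    (-M) ⊗ₖ (-N) = M ⊗ₖ N := by
  ext ⟨i, k⟩ ⟨j, l⟩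
  simp [Matrix.kroneckerMap_apply]

lemma core {dA dB : ℕ} (ν δ : ℝ)
    (ρB : Matrix (Fin dB) (Fin dB) ℂ) (ρA : Matrix (Fin dA) (Fin dA) ℂ)
    (hρB : ρB.PosSemidef) (hρBtr : ρB.trace = 1) (hρA : ρA.PosSemidef)
    (ω00 ω01 ω10 ω11 ω21 : Matrix (Fin dA × Fin dB) (Fin dA × Fin dB) ℂ)
    (h00 : ω00.PosSemidef) (h01 : ω01.PosSemidef) (h10 : ω10.PosSemidef)
    (h11 : ω11.PosSemidef) (h21 : ω21.PosSemidef) (h21tr : ω21.trace = 1)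
    (E0 E1 F0 F1 : Matrix (Fin dA) (Fin dA) ℂ)
    (hE0 : E0.PosSemidef) (hE1 : E1.PosSemidef) (hE : E0 + E1 = 1)
    (hF0 : F0.PosSemidef) (hF1 : F1.PosSemidef) (hF : F0 + F1 = 1)
    (C0 C1 G Bd : Matrix (Fin dB) (Fin dB) ℂ)
    (hC0 : C0.PosSemidef) (hC1 : C1.PosSemidef) (hC : C0 + C1 = 1)
    (hG : G.PosSemidef) (hBd : Bd.PosSemidef) (hGBd : G + Bd = 1)
    (nb00 : traceNorm (ρB - ptraceA ω00) ≤ 6*ν)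
    (nb01 : traceNorm (ρB - ptraceA ω01) ≤ 6*ν)
    (nb10 : traceNorm (ρB - ptraceA ω10) ≤ 6*ν)
    (nb11 : traceNorm (ρB - ptraceA ω11) ≤ 6*ν)
    (nb21 : traceNorm (ρB - ptraceA ω21) ≤ 6*ν)
    (ma00 : traceNorm (ρA - ptraceB ω00) ≤ 6*ν)
    (ma01 : traceNorm (ρA - ptraceB ω01) ≤ 6*ν)
    (ma10 : traceNorm (ρA - ptraceB ω10) ≤ 6*ν)
    (ma11 : traceNorm (ρA - ptraceB ω11) ≤ 6*ν)
    (hg : 1 - δ ≤ ((((1 : Matrix (Fin dA) (Fin dA) ℂ) ⊗ₖ G) * ω21).trace).re) :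
    ((((E0-E1) ⊗ₖ (C0-C1)) * ω00).trace).re + ((((E0-E1) ⊗ₖ (G-Bd)) * ω01).trace).re
      + ((((F0-F1) ⊗ₖ (C0-C1)) * ω10).trace).re - ((((F0-F1) ⊗ₖ (G-Bd)) * ω11).trace).re
      ≤ 2 + 4*δ + 96*ν := by
  -- observable bounds packaged as PSD statements
  have hEm : (1 - (E0 - E1)).PosSemidef := by
    rw [show (1 : Matrix (Fin dA) (Fin dA) ℂ) - (E0 - E1) = E1 + E1 by rw [← hE]; abel]
    exact hE1.add hE1
  have hEp : (1 + (E0 - E1)).PosSemidef := by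
    rw [show (1 : Matrix (Fin dA) (Fin dA) ℂ) + (E0 - E1) = E0 + E0 by rw [← hE]; abel]
    exact hE0.add hE0
  have hFm : (1 - (F0 - F1)).PosSemidef := by
    rw [show (1 : Matrix (Fin dA) (Fin dA) ℂ) - (F0 - F1) = F1 + F1 by rw [← hF]; abel]
    exact hF1.add hF1
  have hFp : (1 + (F0 - F1)).PosSemidef := by
    rw [show (1 : Matrix (Fin dA) (Fin dA) ℂ) + (F0 - F1) = F0 + F0 by rw [← hF]; abel]
    exact hF0.add hF0
  have hBdm : (1 - Bd).PosSemidef := by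
    rw [show (1 : Matrix (Fin dB) (Fin dB) ℂ) - Bd = G by rw [← hGBd]; abel]; exact hG
  have hBdp : (1 + Bd).PosSemidef := Matrix.PosSemidef.one.add hBd
  have hC0m : (1 - C0).PosSemidef := by
    rw [show (1 : Matrix (Fin dB) (Fin dB) ℂ) - C0 = C1 by rw [← hC]; abel]; exact hC1
  have hC0p : (1 + C0).PosSemidef := Matrix.PosSemidef.one.add hC0
  have hC1m : (1 - C1).PosSemidef := by
    rw [show (1 : Matrix (Fin dB) (Fin dB) ℂ) - C1 = C0 by rw [← hC]; abel]; exact hC0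
  have hC1p : (1 + C1).PosSemidef := Matrix.PosSemidef.one.add hC1
  -- step (1): the bad outcome is small on ω21's marginal
  have hBd21 : ((Bd * ptraceA ω21).trace).re ≤ δ := by
    have hGtr : 1 - δ ≤ ((G * ptraceA ω21).trace).re := by
      rw [← trace_one_kron]; exact hg
    have hsum : ((G * ptraceA ω21).trace) + ((Bd * ptraceA ω21).trace) = 1 := by
      rw [← Matrix.trace_add, ← Matrix.add_mul, hGBd, Matrix.one_mul, ptraceA_trace, h21tr]
    have h' := congrArg Complex.re hsum
    rw [Complex.add_re, Complex.one_re] at h'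
    linarith
  -- replacement over ρB (Bob side)
  have step2 : ∀ (σ1 σ2 : Matrix (Fin dB) (Fin dB) ℂ), σ1.IsHermitian → σ2.IsHermitian →
      traceNorm (ρB - σ1) ≤ 6*ν → traceNorm (ρB - σ2) ≤ 6*ν →
      ∀ C : Matrix (Fin dB) (Fin dB) ℂ, (1-C).PosSemidef → (1+C).PosSemidef →
      ((C * σ1).trace).re ≤ ((C * σ2).trace).re + 12*ν := by
    intro σ1 σ2 hσ1 hσ2 hb1 hb2 C hc1 hc2
    have s1 : ((C * σ1).trace).re ≤ ((C * ρB).trace).re + traceNorm (ρB - σ1) :=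
      trace_obs_diff_le (hρB.1.sub hσ1) hc1 hc2
    have s2 : ((C * ρB).trace).re ≤ ((C * σ2).trace).re + traceNorm (σ2 - ρB) :=
      trace_obs_diff_le (hσ2.sub hρB.1) hc1 hc2
    rw [traceNorm_sub_comm _ _ hσ2 hρB.1] at s2
    linarith
  -- replacement over ρA (Alice side)
  have stepA : ∀ (τ1 τ2 : Matrix (Fin dA) (Fin dA) ℂ), τ1.IsHermitian → τ2.IsHermitian →
      traceNorm (ρA - τ1) ≤ 6*ν → traceNorm (ρA - τ2) ≤ 6*ν →
      ∀ C : Matrix (Fin dA) (Fin dA) ℂ, (1-C).PosSemidef → (1+C).PosSemidef →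
      ((C * τ1).trace).re ≤ ((C * τ2).trace).re + 12*ν := by
    intro τ1 τ2 hτ1 hτ2 hb1 hb2 C hc1 hc2
    have s1 : ((C * τ1).trace).re ≤ ((C * ρA).trace).re + traceNorm (ρA - τ1) :=
      trace_obs_diff_le (hρA.1.sub hτ1) hc1 hc2
    have s2 : ((C * ρA).trace).re ≤ ((C * τ2).trace).re + traceNorm (τ2 - ρA) :=
      trace_obs_diff_le (hτ2.sub hρA.1) hc1 hc2
    rw [traceNorm_sub_comm _ _ hτ2 hρA.1] at s2
    linarith
  -- step (2): e-bounds
  have e01 : ((((1 : Matrix (Fin dA) (Fin dA) ℂ) ⊗ₖ Bd) * ω01).trace).re ≤ δ + 12*ν := by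
    rw [trace_one_kron]
    have := step2 (ptraceA ω01) (ptraceA ω21) (ptraceA_psd h01).1 (ptraceA_psd h21).1
      nb01 nb21 Bd hBdm hBdp
    linarith
  have e11 : ((((1 : Matrix (Fin dA) (Fin dA) ℂ) ⊗ₖ Bd) * ω11).trace).re ≤ δ + 12*ν := by
    rw [trace_one_kron]
    have := step2 (ptraceA ω11) (ptraceA ω21) (ptraceA_psd h11).1 (ptraceA_psd h21).1
      nb11 nb21 Bd hBdm hBdp
    linarith
  -- step (3): expansions of the y=1 terms
  have hGmBd : G - Bd = (1 : Matrix (Fin dB) (Fin dB) ℂ) - Bd - Bd := by rw [← hGBd]; abel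
  have exp01 : ((((E0-E1) ⊗ₖ (G-Bd)) * ω01).trace).re
      = ((((E0-E1) ⊗ₖ (1 : Matrix (Fin dB) (Fin dB) ℂ)) * ω01).trace).re
        - ((((E0-E1) ⊗ₖ Bd) * ω01).trace).re - ((((E0-E1) ⊗ₖ Bd) * ω01).trace).re := by
    rw [hGmBd, kron_sub, kron_sub, Matrix.sub_mul, Matrix.sub_mul, Matrix.trace_sub,
      Matrix.trace_sub, Complex.sub_re, Complex.sub_re]
  have exp11 : ((((F0-F1) ⊗ₖ (G-Bd)) * ω11).trace).re
      = ((((F0-F1) ⊗ₖ (1 : Matrix (Fin dB) (Fin dB) ℂ)) * ω11).trace).re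
        - ((((F0-F1) ⊗ₖ Bd) * ω11).trace).re - ((((F0-F1) ⊗ₖ Bd) * ω11).trace).re := by
    rw [hGmBd, kron_sub, kron_sub, Matrix.sub_mul, Matrix.sub_mul, Matrix.trace_sub,
      Matrix.trace_sub, Complex.sub_re, Complex.sub_re]
  have b01 := kron_obs_bound hEm hEp hBd h01
  have b11 := kron_obs_bound hFm hFp hBd h11
  -- step (4): replace Alice marginals
  have a01 : ((((E0-E1) ⊗ₖ (1 : Matrix (Fin dB) (Fin dB) ℂ)) * ω01).trace).re
      ≤ ((((E0-E1) ⊗ₖ (1 : Matrix (Fin dB) (Fin dB) ℂ)) * ω00).trace).re + 12*ν := by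
    rw [trace_kron_one, trace_kron_one]
    exact stepA (ptraceB ω01) (ptraceB ω00) (ptraceB_psd h01).1 (ptraceB_psd h00).1
      ma01 ma00 _ hEm hEp
  have a11 : ((((F0-F1) ⊗ₖ (1 : Matrix (Fin dB) (Fin dB) ℂ)) * ω10).trace).re
      ≤ ((((F0-F1) ⊗ₖ (1 : Matrix (Fin dB) (Fin dB) ℂ)) * ω11).trace).re + 12*ν := by
    rw [trace_kron_one, trace_kron_one]
    exact stepA (ptraceB ω10) (ptraceB ω11) (ptraceB_psd h10).1 (ptraceB_psd h11).1
      ma10 ma11 _ hFm hFp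
  -- step (5): classical bound
  have cl0 : ((((E0-E1) ⊗ₖ (C0-C1)) * ω00).trace).re
      + ((((E0-E1) ⊗ₖ (1 : Matrix (Fin dB) (Fin dB) ℂ)) * ω00).trace).re
      ≤ 2*((((1 : Matrix (Fin dA) (Fin dA) ℂ) ⊗ₖ C0) * ω00).trace).re := by
    have comb : ((E0-E1) ⊗ₖ (C0-C1)) + ((E0-E1) ⊗ₖ (1 : Matrix (Fin dB) (Fin dB) ℂ))
        = ((E0-E1) ⊗ₖ C0) + ((E0-E1) ⊗ₖ C0) := by
      rw [← kron_add, ← kron_add,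
        show (C0 - C1) + 1 = C0 + C0 by rw [← hC]; abel]
    have h' := congrArg (fun M : Matrix (Fin dA × Fin dB) (Fin dA × Fin dB) ℂ
        => ((M * ω00).trace).re) comb
    simp only [Matrix.add_mul, Matrix.trace_add, Complex.add_re] at h'
    have hb := kron_obs_bound hEm hEp hC0 h00
    have hb' := (abs_le.mp hb).2
    linarith
  have cl1 : ((((F0-F1) ⊗ₖ (C0-C1)) * ω10).trace).re
      - ((((F0-F1) ⊗ₖ (1 : Matrix (Fin dB) (Fin dB) ℂ)) * ω10).trace).re
      ≤ 2*((((1 : Matrix (Fin dA) (Fin dA) ℂ) ⊗ₖ C1) * ω10).trace).re := by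
    have comb : ((F0-F1) ⊗ₖ (C0-C1)) + ((F0-F1) ⊗ₖ C1) + ((F0-F1) ⊗ₖ C1)
        = ((F0-F1) ⊗ₖ (1 : Matrix (Fin dB) (Fin dB) ℂ)) := by
      rw [← kron_add, ← kron_add,
        show (C0 - C1) + C1 + C1 = (1 : Matrix (Fin dB) (Fin dB) ℂ) by rw [← hC]; abel]
    have h' := congrArg (fun M : Matrix (Fin dA × Fin dB) (Fin dA × Fin dB) ℂ
        => ((M * ω10).trace).re) comb
    simp only [Matrix.add_mul, Matrix.trace_add, Complex.add_re] at h'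
    have hb := kron_obs_bound hFm hFp hC1 h10
    have hb' := (abs_le.mp hb).1
    linarith
  -- step (6): classical marginals to ρB
  have m0 : ((((1 : Matrix (Fin dA) (Fin dA) ℂ) ⊗ₖ C0) * ω00).trace).re
      ≤ ((C0 * ρB).trace).re + 6*ν := by
    rw [trace_one_kron]
    have s1 : ((C0 * ptraceA ω00).trace).re ≤ ((C0 * ρB).trace).re
        + traceNorm (ρB - ptraceA ω00) :=
      trace_obs_diff_le (hρB.1.sub (ptraceA_psd h00).1) hC0m hC0p
    linarith
  have m1 : ((((1 : Matrix (Fin dA) (Fin dA) ℂ) ⊗ₖ C1) * ω10).trace).re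
      ≤ ((C1 * ρB).trace).re + 6*ν := by
    rw [trace_one_kron]
    have s1 : ((C1 * ptraceA ω10).trace).re ≤ ((C1 * ρB).trace).re
        + traceNorm (ρB - ptraceA ω10) :=
      trace_obs_diff_le (hρB.1.sub (ptraceA_psd h10).1) hC1m hC1p
    linarith
  have msum : ((C0 * ρB).trace).re + ((C1 * ρB).trace).re = 1 := by
    rw [← Complex.add_re, ← Matrix.trace_add, ← Matrix.add_mul, hC, Matrix.one_mul, hρBtr,
      Complex.one_re]
  -- combine everything
  have b01' := abs_le.mp b01
  have b11' := abs_le.mp b11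
  linarith

theorem stmt8 {dA dB : ℕ} (hdA : 0 < dA) (hdB : 0 < dB)
    (δ ν η : ℝ) (hδ : 0 < δ) (hν : 0 < ν) (hη : 0 < η)
    (ρ : Fin 3 → Fin 2 → Matrix (Fin dA × Fin dB) (Fin dA × Fin dB) ℂ)
    (hρ : ∀ x y, (ρ x y).PosSemidef ∧ (ρ x y).trace = 1)
    -- condition (1): the marginals are on average ν-close to the average marginals
    (hnsA : (1 / 6 : ℝ) * ∑ x : Fin 3, ∑ y : Fin 2,
        traceNorm ((6 : ℂ)⁻¹ • (∑ x' : Fin 3, ∑ y' : Fin 2, ptraceB (ρ x' y'))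
          - ptraceB (ρ x y)) ≤ ν)
    (hnsB : (1 / 6 : ℝ) * ∑ x : Fin 3, ∑ y : Fin 2,
        traceNorm ((6 : ℂ)⁻¹ • (∑ x' : Fin 3, ∑ y' : Fin 2, ptraceA (ρ x' y'))
          - ptraceA (ρ x y)) ≤ ν)
    -- condition (2): binary measurements violating CHSH
    (A0 A1 : Fin 3 → Matrix (Fin dA) (Fin dA) ℂ)
    (B0 B1 : Fin 2 → Matrix (Fin dB) (Fin dB) ℂ)
    (hA : ∀ x, (A0 x).PosSemidef ∧ (A1 x).PosSemidef ∧ A0 x + A1 x = 1)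
    (hB : ∀ y, (B0 y).PosSemidef ∧ (B1 y).PosSemidef ∧ B0 y + B1 y = 1)
    (hchsh : Real.sqrt 2 / 2 - η ≤ (1 / 4) *
        ((((A0 0 - A1 0) ⊗ₖ (B0 0 - B1 0)) * ρ 0 0).trace
          + (((A0 0 - A1 0) ⊗ₖ (B0 1 - B1 1)) * ρ 0 1).trace
          + (((A0 1 - A1 1) ⊗ₖ (B0 0 - B1 0)) * ρ 1 0).trace
          - (((A0 1 - A1 1) ⊗ₖ (B0 1 - B1 1)) * ρ 1 1).trace).re)
    -- condition (3): Bob's measurement `B_1` has a near-deterministic outcome on `ρ^{21}`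
    (hguess : ∃ b₁ : Fin 2,
        1 - δ ≤ ((((1 : Matrix (Fin dA) (Fin dA) ℂ)
          ⊗ₖ (if b₁ = 0 then B0 1 else B1 1)) * ρ 2 1).trace).re) :
    (Real.sqrt 2 - 1) / 2 - η - 75 * ν ≤ δ := by
  -- the average marginals
  set ρB : Matrix (Fin dB) (Fin dB) ℂ :=
    (6 : ℂ)⁻¹ • (∑ x' : Fin 3, ∑ y' : Fin 2, ptraceA (ρ x' y')) with hρBdef
  set ρA : Matrix (Fin dA) (Fin dA) ℂ :=
    (6 : ℂ)⁻¹ • (∑ x' : Fin 3, ∑ y' : Fin 2, ptraceB (ρ x' y')) with hρAdef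
  have hcast : ((6⁻¹ : ℝ) : ℂ) = (6 : ℂ)⁻¹ := by push_cast; ring
  -- positivity of the average marginals
  have hSB : (∑ x' : Fin 3, ∑ y' : Fin 2, ptraceA (ρ x' y')).PosSemidef :=
    psd_sum _ _ fun x _ => psd_sum _ _ fun y _ => ptraceA_psd (hρ x y).1
  have hSA : (∑ x' : Fin 3, ∑ y' : Fin 2, ptraceB (ρ x' y')).PosSemidef :=
    psd_sum _ _ fun x _ => psd_sum _ _ fun y _ => ptraceB_psd (hρ x y).1
  have hρBpsd : ρB.PosSemidef := by
    rw [hρBdef, ← hcast]; exact psd_smul hSB (by norm_num)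
  have hρApsd : ρA.PosSemidef := by
    rw [hρAdef, ← hcast]; exact psd_smul hSA (by norm_num)
  have hρBtr : ρB.trace = 1 := by
    rw [hρBdef, Matrix.trace_smul]
    have h6 : (∑ x' : Fin 3, ∑ y' : Fin 2, ptraceA (ρ x' y')).trace = 6 := by
      have e : ∀ (x : Fin 3) (y : Fin 2), (ptraceA (ρ x y)).trace = 1 := fun x y => by
        rw [ptraceA_trace, (hρ x y).2]
      simp only [Fin.sum_univ_three, Fin.sum_univ_two, Matrix.trace_add]
      rw [e 0 0, e 0 1, e 1 0, e 1 1, e 2 0, e 2 1]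
      norm_num
    rw [h6, smul_eq_mul]
    norm_num
  -- individual trace-norm bounds
  have hextract : ∀ (f : Fin 3 → Fin 2 → ℝ), (∀ a b, 0 ≤ f a b) →
      ((1 / 6 : ℝ) * ∑ x : Fin 3, ∑ y : Fin 2, f x y ≤ ν) → ∀ a b, f a b ≤ 6 * ν := by
    intro f hf hsum a b
    have h1 : f a b ≤ ∑ y : Fin 2, f a y :=
      Finset.single_le_sum (fun y _ => hf a y) (Finset.mem_univ b)
    have h2 : ∑ y : Fin 2, f a y ≤ ∑ x : Fin 3, ∑ y : Fin 2, f x y :=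
      Finset.single_le_sum (fun x _ => Finset.sum_nonneg fun y _ => hf x y)
        (Finset.mem_univ a)
    linarith
  have nbB : ∀ a b, traceNorm (ρB - ptraceA (ρ a b)) ≤ 6 * ν :=
    hextract _ (fun a b => traceNorm_nonneg _) hnsB
  have nbA : ∀ a b, traceNorm (ρA - ptraceB (ρ a b)) ≤ 6 * ν :=
    hextract _ (fun a b => traceNorm_nonneg _) hnsA
  obtain ⟨b₁, hb⟩ := hguess
  have hfinal : (((A0 0 - A1 0) ⊗ₖ (B0 0 - B1 0)) * ρ 0 0).trace.re
      + (((A0 0 - A1 0) ⊗ₖ (B0 1 - B1 1)) * ρ 0 1).trace.re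
      + (((A0 1 - A1 1) ⊗ₖ (B0 0 - B1 0)) * ρ 1 0).trace.re
      - (((A0 1 - A1 1) ⊗ₖ (B0 1 - B1 1)) * ρ 1 1).trace.re ≤ 2 + 4*δ + 96*ν := by
    fin_cases b₁
    · -- b₁ = 0 : the good outcome is B0 1
      simp only [show ((⟨0, by norm_num⟩ : Fin 2) = 0) from rfl, if_pos rfl] at hb
      exact core (dA := dA) (dB := dB) ν δ ρB ρA hρBpsd hρBtr hρApsd
        (ρ 0 0) (ρ 0 1) (ρ 1 0) (ρ 1 1) (ρ 2 1)
        (hρ 0 0).1 (hρ 0 1).1 (hρ 1 0).1 (hρ 1 1).1 (hρ 2 1).1 (hρ 2 1).2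
        (A0 0) (A1 0) (A0 1) (A1 1)
        (hA 0).1 (hA 0).2.1 (hA 0).2.2 (hA 1).1 (hA 1).2.1 (hA 1).2.2
        (B0 0) (B1 0) (B0 1) (B1 1)
        (hB 0).1 (hB 0).2.1 (hB 0).2.2 (hB 1).1 (hB 1).2.1 (hB 1).2.2
        (nbB 0 0) (nbB 0 1) (nbB 1 0) (nbB 1 1) (nbB 2 1)
        (nbA 0 0) (nbA 0 1) (nbA 1 0) (nbA 1 1) hb
    · -- b₁ = 1 : the good outcome is B1 1
      simp only [show ((⟨1, by norm_num⟩ : Fin 2) ≠ 0) from by decide, if_neg] at hb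
      have hcore := core (dA := dA) (dB := dB) ν δ ρB ρA hρBpsd hρBtr hρApsd
        (ρ 0 0) (ρ 0 1) (ρ 1 0) (ρ 1 1) (ρ 2 1)
        (hρ 0 0).1 (hρ 0 1).1 (hρ 1 0).1 (hρ 1 1).1 (hρ 2 1).1 (hρ 2 1).2
        (A1 0) (A0 0) (A1 1) (A0 1)
        (hA 0).2.1 (hA 0).1 (by rw [add_comm]; exact (hA 0).2.2)
        (hA 1).2.1 (hA 1).1 (by rw [add_comm]; exact (hA 1).2.2)
        (B1 0) (B0 0) (B1 1) (B0 1)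
        (hB 0).2.1 (hB 0).1 (by rw [add_comm]; exact (hB 0).2.2)
        (hB 1).2.1 (hB 1).1 (by rw [add_comm]; exact (hB 1).2.2)
        (nbB 0 0) (nbB 0 1) (nbB 1 0) (nbB 1 1) (nbB 2 1)
        (nbA 0 0) (nbA 0 1) (nbA 1 0) (nbA 1 1) hb
      have r1 : (A1 0 - A0 0) ⊗ₖ (B1 0 - B0 0) = (A0 0 - A1 0) ⊗ₖ (B0 0 - B1 0) := by
        rw [← neg_sub (A0 0) (A1 0), ← neg_sub (B0 0) (B1 0), kron_neg_neg]
      have r2 : (A1 0 - A0 0) ⊗ₖ (B1 1 - B0 1) = (A0 0 - A1 0) ⊗ₖ (B0 1 - B1 1) := by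
        rw [← neg_sub (A0 0) (A1 0), ← neg_sub (B0 1) (B1 1), kron_neg_neg]
      have r3 : (A1 1 - A0 1) ⊗ₖ (B1 0 - B0 0) = (A0 1 - A1 1) ⊗ₖ (B0 0 - B1 0) := by
        rw [← neg_sub (A0 1) (A1 1), ← neg_sub (B0 0) (B1 0), kron_neg_neg]
      have r4 : (A1 1 - A0 1) ⊗ₖ (B1 1 - B0 1) = (A0 1 - A1 1) ⊗ₖ (B0 1 - B1 1) := by
        rw [← neg_sub (A0 1) (A1 1), ← neg_sub (B0 1) (B1 1), kron_neg_neg]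
      rw [r1, r2, r3, r4] at hcore
      exact hcore
  have hre : ((((A0 0 - A1 0) ⊗ₖ (B0 0 - B1 0)) * ρ 0 0).trace
          + (((A0 0 - A1 0) ⊗ₖ (B0 1 - B1 1)) * ρ 0 1).trace
          + (((A0 1 - A1 1) ⊗ₖ (B0 0 - B1 0)) * ρ 1 0).trace
          - (((A0 1 - A1 1) ⊗ₖ (B0 1 - B1 1)) * ρ 1 1).trace).re
      = (((A0 0 - A1 0) ⊗ₖ (B0 0 - B1 0)) * ρ 0 0).trace.re
      + (((A0 0 - A1 0) ⊗ₖ (B0 1 - B1 1)) * ρ 0 1).trace.re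
      + (((A0 1 - A1 1) ⊗ₖ (B0 0 - B1 0)) * ρ 1 0).trace.re
      - (((A0 1 - A1 1) ⊗ₖ (B0 1 - B1 1)) * ρ 1 1).trace.re := by
    simp [Complex.add_re, Complex.sub_re]
  rw [hre] at hchsh
  have hsqrt2 : Real.sqrt 2 / 2 - 1/2 = (Real.sqrt 2 - 1) / 2 := by ring
  linarith
end
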